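/- arXiv:1909.03581 — 6 statements merged into one kernel-verified Lean document; each statement's English description precedes it below -/
import Mathlib

section
/- The map f ↦ U(f) is injective on L¹(ℝ^d; ℂ): if f, g ∈ L¹(ℝ^d; ℂ) satisfy U(f) = U(g) as operators on L²(ℝ^d; ℂ), then f = g almost everywhere. (This follows from the evaluation identity (U(f)ξ)(0) = ∫_{ℝ^d} f(t) ξ(−t) dt valid for all Schwartz functions ξ.) -/
open MeasureTheory Complex Filter

noncomputable section

/-- `ℝ^d` as Euclidean space. -/
abbrev Ed (d : ℕ) : Type := EuclideanSpace ℝ (Fin d)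

/-- The pairing `⟨t, θ r⟩` where `θ` acts as a matrix on `r`. -/
def pairing {d : ℕ} (θ : Matrix (Fin d) (Fin d) ℝ) (t r : Ed d) : ℝ :=
  ∑ i, t i * ∑ j, θ i j * r j

/-- The Weyl operator at `t`, acting on functions:
`(U(t)ξ)(r) = exp(−(i/2)⟨t, θr⟩) ξ(r − t)`. -/
def weyl {d : ℕ} (θ : Matrix (Fin d) (Fin d) ℝ) (t : Ed d) (ξ : Ed d → ℂ) : Ed d → ℂ :=
  fun r => Complex.exp (-(Complex.I / 2) * (pairing θ t r : ℂ)) * ξ (r - t)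

/-- The complex Hilbert space `L²(ℝ^d; ℂ)`. -/
abbrev L2 (d : ℕ) := Lp ℂ 2 (volume : Measure (Ed d))
section AuxLemmas
open Topology
open scoped ContDiff

lemma aux_norm_weyl {d : ℕ} (θ : Matrix (Fin d) (Fin d) ℝ) (t r : Ed d) (u : Ed d → ℂ) :
    ‖weyl θ t u r‖ = ‖u (r - t)‖ := by
  have h : (-(Complex.I / 2) * ((pairing θ t r : ℝ) : ℂ))
      = ((-(pairing θ t r / 2) : ℝ) : ℂ) * Complex.I := by push_cast; ring
  rw [weyl, norm_mul, h, Complex.norm_exp_ofReal_mul_I, one_mul]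

lemma aux_pairing_cont {d : ℕ} (θ : Matrix (Fin d) (Fin d) ℝ) :
    Continuous fun p : Ed d × Ed d => pairing θ p.1 p.2 := by
  unfold pairing
  apply continuous_finset_sum
  intro i _
  apply Continuous.mul
  · exact ((EuclideanSpace.proj i : Ed d →L[ℝ] ℝ).continuous).comp continuous_fst
  · apply continuous_finset_sum
    intro j _
    exact continuous_const.mul
      (((EuclideanSpace.proj j : Ed d →L[ℝ] ℝ).continuous).comp continuous_snd)

lemma aux_weyl_cont {d : ℕ} (θ : Matrix (Fin d) (Fin d) ℝ) {u : Ed d → ℂ} (hu : Continuous u) :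
    Continuous fun p : Ed d × Ed d => weyl θ p.1 u p.2 := by
  unfold weyl
  apply Continuous.mul
  · exact Complex.continuous_exp.comp
      (continuous_const.mul (Complex.continuous_ofReal.comp (aux_pairing_cont θ)))
  · exact hu.comp (continuous_snd.sub continuous_fst)

lemma aux_weyl_ae {d : ℕ} (θ : Matrix (Fin d) (Fin d) ℝ) (t : Ed d) {u v : Ed d → ℂ}
    (huv : u =ᵐ[volume] v) : weyl θ t u =ᵐ[volume] weyl θ t v := by
  have h : (fun r : Ed d => u (r - t)) =ᵐ[volume] fun r => v (r - t) :=
    (measurePreserving_sub_right volume t).quasiMeasurePreserving.ae_eq_comp huv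
  filter_upwards [h] with r hr
  simp only [weyl, hr]

lemma aux_eLpNorm_weyl {d : ℕ} (θ : Matrix (Fin d) (Fin d) ℝ) (t : Ed d) {u : Ed d → ℂ}
    (hu : AEStronglyMeasurable u volume) :
    eLpNorm (weyl θ t u) 2 volume = eLpNorm u 2 volume := by
  have h1 : eLpNorm (weyl θ t u) 2 volume = eLpNorm (u ∘ (· - t)) 2 volume :=
    eLpNorm_congr_norm_ae (Eventually.of_forall fun r => aux_norm_weyl θ t r u)
  rw [h1, eLpNorm_comp_measurePreserving hu (measurePreserving_sub_right volume t)]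

lemma aux_normU {d : ℕ} (θ : Matrix (Fin d) (Fin d) ℝ) {ξf : Ed d → ℂ}
    (hc : Continuous ξf) (ξ : L2 d) (hξ : ⇑ξ =ᵐ[volume] ξf) {t : Ed d}
    {X : L2 d} (hw : ⇑X =ᵐ[volume] weyl θ t ξf) : ‖X‖ = ‖ξ‖ := by
  rw [Lp.norm_def, Lp.norm_def]
  congr 1
  calc eLpNorm (⇑X) 2 volume = eLpNorm (weyl θ t ξf) 2 volume := eLpNorm_congr_ae hw
    _ = eLpNorm ξf 2 volume := aux_eLpNorm_weyl θ t hc.aestronglyMeasurable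
    _ = eLpNorm (⇑ξ) 2 volume := (eLpNorm_congr_ae hξ).symm

lemma aux_transl_integrable {d : ℕ} {ξf : Ed d → ℂ} (hc : Continuous ξf)
    (hcs : HasCompactSupport ξf) (s : Ed d) :
    Integrable (fun r : Ed d => ξf (r - s)) volume := by
  exact ((measurePreserving_sub_right volume s).integrable_comp
    hc.aestronglyMeasurable).mpr (hc.integrable_of_hasCompactSupport hcs)


lemma aux_pairing_cont_r {d : ℕ} (θ : Matrix (Fin d) (Fin d) ℝ) (t : Ed d) :
    Continuous fun r : Ed d => pairing θ t r := by
  unfold pairing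
  apply continuous_finset_sum
  intro i _
  exact continuous_const.mul (continuous_finset_sum _ fun j _ =>
    continuous_const.mul (EuclideanSpace.proj j : Ed d →L[ℝ] ℝ).continuous)

lemma aux_pairing_cont_t {d : ℕ} (θ : Matrix (Fin d) (Fin d) ℝ) (r : Ed d) :
    Continuous fun t : Ed d => pairing θ t r := by
  unfold pairing
  apply continuous_finset_sum
  intro i _
  exact ((EuclideanSpace.proj i : Ed d →L[ℝ] ℝ).continuous).mul continuous_const

lemma aux_weyl_cont_r {d : ℕ} (θ : Matrix (Fin d) (Fin d) ℝ) (t : Ed d) {u : Ed d → ℂ}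
    (hu : Continuous u) : Continuous (weyl θ t u) := by
  unfold weyl
  exact (Complex.continuous_exp.comp (continuous_const.mul
    (Complex.continuous_ofReal.comp (aux_pairing_cont_r θ t)))).mul
    (hu.comp (continuous_id.sub continuous_const))

lemma aux_weyl_cont_t {d : ℕ} (θ : Matrix (Fin d) (Fin d) ℝ) (r : Ed d) {u : Ed d → ℂ}
    (hu : Continuous u) : Continuous fun t => weyl θ t u r := by
  unfold weyl
  exact (Complex.continuous_exp.comp (continuous_const.mul
    (Complex.continuous_ofReal.comp (aux_pairing_cont_t θ r)))).mul
    (hu.comp (continuous_const.sub continuous_id))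

set_option maxHeartbeats 1000000 in
lemma aux_Ucont {d : ℕ} (θ : Matrix (Fin d) (Fin d) ℝ)
    (Uop : Ed d → (L2 d →L[ℂ] L2 d)) {ξf : Ed d → ℂ}
    (hc : Continuous ξf) (hcs : HasCompactSupport ξf)
    (ξ : L2 d) (hξ : ⇑ξ =ᵐ[volume] ξf)
    (hw : ∀ t, ⇑(Uop t ξ) =ᵐ[volume] weyl θ t ξf)
    (hnorm : ∀ t, ‖Uop t ξ‖ = ‖ξ‖) :
    Continuous fun t => Uop t ξ := by
  obtain ⟨C, hC0⟩ := hc.norm.bounded_above_of_compact_support hcs.norm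
  have hC : ∀ x, ‖ξf x‖ ≤ C := fun x => by simpa using hC0 x
  have hwr : ∀ t, Continuous (weyl θ t ξf) := fun t => aux_weyl_cont_r θ t hc
  have hwt : ∀ r : Ed d, Continuous fun t => weyl θ t ξf r := fun r => aux_weyl_cont_t θ r hc
  rw [continuous_iff_continuousAt]
  intro s
  have hinner : ∀ t : Ed d, (inner ℂ (Uop s ξ) (Uop t ξ) : ℂ)
      = ∫ r, (starRingEnd ℂ) (weyl θ s ξf r) * weyl θ t ξf r := by
    intro t
    rw [MeasureTheory.L2.inner_def]
    refine integral_congr_ae ?_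
    filter_upwards [hw s, hw t] with r h1 h2
    rw [h1, h2]
    rw [RCLike.inner_apply]
    ring
  have hcont : Continuous fun t : Ed d =>
      ∫ r, (starRingEnd ℂ) (weyl θ s ξf r) * weyl θ t ξf r := by
    apply continuous_of_dominated (bound := fun r => ‖ξf (r - s)‖ * C)
    · intro t
      exact ((continuous_star.comp (hwr s)).mul (hwr t)).aestronglyMeasurable
    · intro t
      refine Eventually.of_forall fun r => ?_
      rw [norm_mul]
      have h1 : ‖(starRingEnd ℂ) (weyl θ s ξf r)‖ = ‖ξf (r - s)‖ := by
        rw [RCLike.norm_conj, aux_norm_weyl]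
      rw [h1]
      exact mul_le_mul_of_nonneg_left (by rw [aux_norm_weyl]; exact hC _) (norm_nonneg _)
    · exact (aux_transl_integrable hc hcs s).norm.mul_const C
    · exact Eventually.of_forall fun r => continuous_const.mul (hwt r)
  have h2 : Tendsto (fun t : Ed d => (inner ℂ (Uop s ξ) (Uop t ξ) : ℂ)) (𝓝 s)
      (𝓝 (inner ℂ (Uop s ξ) (Uop s ξ) : ℂ)) := by
    rw [show (fun t : Ed d => (inner ℂ (Uop s ξ) (Uop t ξ) : ℂ))
        = fun t => ∫ r, (starRingEnd ℂ) (weyl θ s ξf r) * weyl θ t ξf r from funext hinner,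
      hinner s]
    exact hcont.tendsto s
  have h3 : Tendsto (fun t : Ed d => ‖Uop t ξ - Uop s ξ‖ ^ 2) (𝓝 s) (𝓝 0) := by
    have hre : Tendsto (fun t : Ed d => ‖ξ‖ ^ 2 - 2 * Complex.re (inner ℂ (Uop s ξ) (Uop t ξ) : ℂ)
        + ‖ξ‖ ^ 2) (𝓝 s)
        (𝓝 (‖ξ‖ ^ 2 - 2 * Complex.re (inner ℂ (Uop s ξ) (Uop s ξ) : ℂ) + ‖ξ‖ ^ 2)) :=
      (tendsto_const_nhds.sub (((Complex.continuous_re.tendsto _).comp h2).const_mul 2)).add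
        tendsto_const_nhds
    have hval : ‖ξ‖ ^ 2 - 2 * Complex.re (inner ℂ (Uop s ξ) (Uop s ξ) : ℂ) + ‖ξ‖ ^ 2 = 0 := by
      have hs := inner_self_eq_norm_sq (𝕜 := ℂ) (Uop s ξ)
      rw [show RCLike.re (inner ℂ (Uop s ξ) (Uop s ξ) : ℂ)
          = Complex.re (inner ℂ (Uop s ξ) (Uop s ξ) : ℂ) from rfl] at hs
      rw [hs, hnorm s]
      ring
    rw [hval] at hre
    refine hre.congr fun t => ?_
    rw [norm_sub_sq (𝕜 := ℂ), inner_re_symm, hnorm t, hnorm s]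
    rfl
  have h4 : Tendsto (fun t : Ed d => ‖Uop t ξ - Uop s ξ‖) (𝓝 s) (𝓝 0) := by
    have h5 := (Real.continuous_sqrt.tendsto 0).comp h3
    rw [Real.sqrt_zero] at h5
    refine h5.congr fun t => ?_
    simp [Real.sqrt_sq (norm_nonneg _)]
  exact tendsto_iff_norm_sub_tendsto_zero.mpr h4


end AuxLemmas

set_option maxHeartbeats 2000000 in
set_option synthInstance.maxHeartbeats 1000000 in
open Topology in
open scoped ContDiff in
/-- The map `f ↦ U(f)` is injective on `L¹(ℝ^d; ℂ)`: if `U(f) = U(g)` as bounded operators on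
`L²(ℝ^d; ℂ)`, then `f = g` almost everywhere. -/
theorem statement4 (d : ℕ) (hd : 0 < d) (θ : Matrix (Fin d) (Fin d) ℝ)
    (hθ : θ.transpose = -θ)
    (Uop : Ed d → (L2 d →L[ℂ] L2 d))
    (hU : ∀ (t : Ed d) (ξ : L2 d), ⇑(Uop t ξ) =ᵐ[volume] weyl θ t ⇑ξ)
    (f g : Ed d → ℂ) (hf : Integrable f volume) (hg : Integrable g volume)
    (Ufop Ugop : L2 d →L[ℂ] L2 d)
    (hUf : ∀ ξ : L2 d, Ufop ξ = ∫ t : Ed d, f t • Uop t ξ ∂volume)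
    (hUg : ∀ ξ : L2 d, Ugop ξ = ∫ t : Ed d, g t • Uop t ξ ∂volume)
    (heq : Ufop = Ugop) :
    f =ᵐ[volume] g := by
  have hInt0 : Integrable (fun t => f t - g t) volume := hf.sub hg
  have key : ∀ (φ : Ed d → ℝ), ContDiff ℝ ∞ φ → HasCompactSupport φ →
      ∫ t, φ t • (f t - g t) ∂(volume : Measure (Ed d)) = 0 := by
    intro φ hφ hφc
    set ξf : Ed d → ℂ := fun s => (φ (-s) : ℂ) with hξfdef
    have hξc : Continuous ξf := Complex.continuous_ofReal.comp (hφ.continuous.comp continuous_neg)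
    have hξcs : HasCompactSupport ξf := by
      have h1 : HasCompactSupport (Complex.ofReal ∘ φ) :=
        hφc.comp_left (g := Complex.ofReal) Complex.ofReal_zero
      exact h1.comp_isClosedEmbedding (Homeomorph.neg (Ed d)).isClosedEmbedding
    have hmem : MemLp ξf 2 volume := hξc.memLp_of_hasCompactSupport hξcs
    set ξ : L2 d := hmem.toLp ξf with hξdef
    have hξ : ⇑ξ =ᵐ[volume] ξf := hmem.coeFn_toLp
    have hw : ∀ t, ⇑(Uop t ξ) =ᵐ[volume] weyl θ t ξf :=
      fun t => (hU t ξ).trans (aux_weyl_ae θ t hξ)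
    have hnorm : ∀ t, ‖Uop t ξ‖ = ‖ξ‖ := fun t => aux_normU θ hξc ξ hξ (hw t)
    have hUcont : Continuous fun t => Uop t ξ := aux_Ucont θ Uop hξc hξcs ξ hξ hw hnorm
    obtain ⟨C, hC0⟩ := hξc.norm.bounded_above_of_compact_support hξcs.norm
    have hC : ∀ x, ‖ξf x‖ ≤ C := fun x => by simpa using hC0 x
    have hInt : ∀ (u : Ed d → ℂ), Integrable u volume →
        Integrable (fun t => u t • Uop t ξ) volume := by
      intro u hu
      refine Integrable.mono' (hu.norm.mul_const ‖ξ‖)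
        (hu.aestronglyMeasurable.smul hUcont.aestronglyMeasurable) ?_
      refine Eventually.of_forall fun t => ?_
      rw [norm_smul, hnorm t]
    have hh : Integrable (fun t => f t - g t) volume := hf.sub hg
    have hzero : ∫ t, (f t - g t) • Uop t ξ ∂volume = 0 := by
      have hfg : Ufop ξ = Ugop ξ := by rw [heq]
      rw [hUf, hUg] at hfg
      have e : ∫ t, (f t - g t) • Uop t ξ ∂volume
          = (∫ t, f t • Uop t ξ ∂volume) - ∫ t, g t • Uop t ξ ∂volume := by
        rw [← integral_sub (hInt f hf) (hInt g hg)]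
        congr 1
        funext t
        rw [sub_smul]
      rw [e, hfg, sub_self]
    have hwr : ∀ t, Continuous (weyl θ t ξf) := fun t => aux_weyl_cont_r θ t hξc
    have hwt : ∀ r : Ed d, Continuous fun t => weyl θ t ξf r := fun r => aux_weyl_cont_t θ r hξc
    set G : Ed d → ℂ := fun r => ∫ t, (f t - g t) * weyl θ t ξf r ∂volume with hGdef
    have hGcont : Continuous G := by
      apply continuous_of_dominated (bound := fun t => ‖f t - g t‖ * C)
      · intro r
        exact hh.aestronglyMeasurable.mul ((hwt r).aestronglyMeasurable)
      · intro r
        refine Eventually.of_forall fun t => ?_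
        rw [norm_mul]
        refine mul_le_mul_of_nonneg_left ?_ (norm_nonneg _)
        rw [aux_norm_weyl]
        exact hC _
      · exact hh.norm.mul_const C
      · exact Eventually.of_forall fun t => continuous_const.mul (hwr t)
    have hG0 : ∀ (ψ : Ed d → ℝ), ContDiff ℝ ∞ ψ → HasCompactSupport ψ →
        ∫ r, ψ r • G r ∂(volume : Measure (Ed d)) = 0 := by
      intro ψ hψ hψc
      set ηc : Ed d → ℂ := fun r => (ψ r : ℂ) with hηcdef
      have hηcc : Continuous ηc := Complex.continuous_ofReal.comp hψ.continuous
      have hηcs : HasCompactSupport ηc :=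
        hψc.comp_left (g := Complex.ofReal) Complex.ofReal_zero
      have hηmem : MemLp ηc 2 volume := hηcc.memLp_of_hasCompactSupport hηcs
      set η : L2 d := hηmem.toLp ηc with hηdef
      have hη : ⇑η =ᵐ[volume] ηc := hηmem.coeFn_toLp
      have h1 : ∫ t, (inner ℂ η ((f t - g t) • Uop t ξ) : ℂ) ∂volume = 0 := by
        have e := (innerSL ℂ η).integral_comp_comm (hInt _ hh)
        rw [hzero] at e
        simpa [inner_smul_right] using e
      have h2 : ∀ t, (inner ℂ η ((f t - g t) • Uop t ξ) : ℂ)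
          = (f t - g t) * ∫ r, (ψ r : ℂ) * weyl θ t ξf r ∂volume := by
        intro t
        rw [inner_smul_right]
        congr 1
        rw [MeasureTheory.L2.inner_def]
        refine integral_congr_ae ?_
        filter_upwards [hη, hw t] with r e1 e2
        rw [e1, e2, hηcdef]
        simp only [RCLike.inner_apply, Complex.conj_ofReal]
        ring
      have hψi : Integrable ψ volume := hψ.continuous.integrable_of_hasCompactSupport hψc
      have hF : Integrable
          (fun z : Ed d × Ed d => (f z.1 - g z.1) * ((ψ z.2 : ℂ) * weyl θ z.1 ξf z.2))
          (volume.prod volume) := by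
        have hmeas : AEStronglyMeasurable
            (fun z : Ed d × Ed d => (f z.1 - g z.1) * ((ψ z.2 : ℂ) * weyl θ z.1 ξf z.2))
            (volume.prod volume) := by
          apply AEStronglyMeasurable.mul
          · exact hh.aestronglyMeasurable.comp_quasiMeasurePreserving
              MeasureTheory.Measure.quasiMeasurePreserving_fst
          · exact ((Complex.continuous_ofReal.comp (hψ.continuous.comp continuous_snd)).mul
              (aux_weyl_cont θ hξc)).aestronglyMeasurable
        refine Integrable.mono'
          (Integrable.mul_prod hh.norm (hψi.norm.mul_const C)) hmeas ?_
        refine Eventually.of_forall fun z => ?_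
        rw [norm_mul, norm_mul]
        refine mul_le_mul_of_nonneg_left ?_ (norm_nonneg _)
        rw [Complex.norm_real]
        refine mul_le_mul_of_nonneg_left ?_ (norm_nonneg _)
        rw [aux_norm_weyl]
        exact hC _
      have h3 : ∫ r, (ψ r : ℂ) * G r ∂volume = 0 := by
        have e1 : ∫ t, (f t - g t) * ∫ r, (ψ r : ℂ) * weyl θ t ξf r ∂volume ∂volume
            = ∫ t, ∫ r, (f t - g t) * ((ψ r : ℂ) * weyl θ t ξf r) ∂volume ∂volume := by
          congr 1
          funext t
          rw [integral_const_mul]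
        have e2 := integral_integral_swap
          (f := fun t r => (f t - g t) * ((ψ r : ℂ) * weyl θ t ξf r)) hF
        have e3 : ∀ r, ∫ t, (f t - g t) * ((ψ r : ℂ) * weyl θ t ξf r) ∂volume
            = (ψ r : ℂ) * G r := by
          intro r
          rw [hGdef, ← integral_const_mul]
          congr 1
          funext t
          ring
        have e4 : ∫ t, (f t - g t) * ∫ r, (ψ r : ℂ) * weyl θ t ξf r ∂volume ∂volume = 0 := by
          rw [← h1]
          refine integral_congr_ae (Eventually.of_forall fun t => ?_)
          simpa using (h2 t).symm
        calc ∫ r, (ψ r : ℂ) * G r ∂volume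
            = ∫ r, ∫ t, (f t - g t) * ((ψ r : ℂ) * weyl θ t ξf r) ∂volume ∂volume := by
              refine integral_congr_ae (Eventually.of_forall fun r => ?_)
              simpa using (e3 r).symm
          _ = ∫ t, ∫ r, (f t - g t) * ((ψ r : ℂ) * weyl θ t ξf r) ∂volume ∂volume := e2.symm
          _ = 0 := by rw [← e1, e4]
      have e5 : ∫ r, ψ r • G r ∂(volume : Measure (Ed d)) = ∫ r, (ψ r : ℂ) * G r ∂volume := by
        refine integral_congr_ae (Eventually.of_forall fun r => ?_)
        show ψ r • G r = (ψ r : ℂ) * G r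
        exact Complex.real_smul
      rw [e5, h3]
    have hGae := ae_eq_zero_of_integral_contDiff_smul_eq_zero hGcont.locallyIntegrable hG0
    have hGeq : G = fun _ => 0 :=
      (hGcont.ae_eq_iff_eq volume continuous_const).mp hGae
    have hweyl0 : ∀ t : Ed d, weyl θ t ξf 0 = (φ t : ℂ) := by
      intro t
      have hp : pairing θ t 0 = 0 := by
        unfold pairing
        simp
      rw [weyl]  -- might need show
      rw [hp]
      simp [hξfdef]
    have hG0eval : G 0 = ∫ t, (f t - g t) * (φ t : ℂ) ∂volume := by
      rw [hGdef]
      refine integral_congr_ae (Eventually.of_forall fun t => ?_)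
      show (f t - g t) * weyl θ t ξf 0 = (f t - g t) * (φ t : ℂ)
      rw [hweyl0 t]
    have hfinal : ∫ t, (f t - g t) * (φ t : ℂ) ∂volume = 0 := by
      rw [← hG0eval, hGeq]
    calc ∫ t, φ t • (f t - g t) ∂(volume : Measure (Ed d))
        = ∫ t, (f t - g t) * (φ t : ℂ) ∂volume := by
          refine integral_congr_ae (Eventually.of_forall fun t => ?_)
          show φ t • (f t - g t) = (f t - g t) * (φ t : ℂ)
          rw [Complex.real_smul]
          ring
      _ = 0 := hfinal
  have hfg0 := ae_eq_zero_of_integral_contDiff_smul_eq_zero hInt0.locallyIntegrable key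
  filter_upwards [hfg0] with t ht
  exact sub_eq_zero.mp ht
end
end

section
/- The Schwartz space is closed under θ-twisted convolution: if f, g ∈ S(ℝ^d; ℂ) are Schwartz functions, then f *_θ g is again a Schwartz function on ℝ^d. -/
open MeasureTheory Complex Filter

noncomputable section

/-- The θ-twisted convolution: `(f *_θ g)(s) = ∫ exp((i/2)⟨s, θt⟩) f(s − t) g(t) dt`. -/
def twistedConv {d : ℕ} (θ : Matrix (Fin d) (Fin d) ℝ) (f g : Ed d → ℂ) : Ed d → ℂ :=
  fun s => ∫ t : Ed d, Complex.exp ((Complex.I / 2) * (pairing θ s t : ℂ)) * (f (s - t) * g t) ∂volume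

open scoped SchwartzMap ContDiff

set_option maxSynthPendingDepth 3
set_option maxHeartbeats 1000000
set_option synthInstance.maxHeartbeats 1000000

namespace TCAux

variable {d : ℕ} (θ : Matrix (Fin d) (Fin d) ℝ)

lemma pairing_add_left (s s' t : Ed d) :
    pairing θ (s + s') t = pairing θ s t + pairing θ s' t := by
  simp [pairing, PiLp.add_apply, add_mul, Finset.sum_add_distrib]

lemma pairing_smul_left (c : ℝ) (s t : Ed d) :
    pairing θ (c • s) t = c * pairing θ s t := by
  simp [pairing, PiLp.smul_apply, smul_eq_mul, mul_assoc, Finset.mul_sum]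

lemma pairing_add_right (s t t' : Ed d) :
    pairing θ s (t + t') = pairing θ s t + pairing θ s t' := by
  simp [pairing, PiLp.add_apply, mul_add, Finset.sum_add_distrib]

lemma pairing_smul_right (c : ℝ) (s t : Ed d) :
    pairing θ s (c • t) = c * pairing θ s t := by
  simp only [pairing, PiLp.smul_apply, smul_eq_mul, Finset.mul_sum]
  congr 1; ext i
  exact Finset.sum_congr rfl fun j _ => by ring

/-- The inner linear functional `t ↦ I * (pairing θ s t / 2)`. -/
def bcInner (s : Ed d) : Ed d →ₗ[ℝ] ℂ where
  toFun t := Complex.I * ((pairing θ s t / 2 : ℝ) : ℂ)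
  map_add' t t' := by rw [pairing_add_right]; push_cast; ring
  map_smul' c t := by
    simp only [RingHom.id_apply, smul_eq_mul]
    rw [pairing_smul_right]; push_cast
    rw [Complex.real_smul]; push_cast; ring

def bcLin : Ed d →ₗ[ℝ] (Ed d →L[ℝ] ℂ) where
  toFun s := LinearMap.toContinuousLinearMap (bcInner θ s)
  map_add' s s' := by
    ext t
    simp only [LinearMap.coe_toContinuousLinearMap', ContinuousLinearMap.add_apply, bcInner,
      LinearMap.coe_mk, AddHom.coe_mk]
    rw [pairing_add_left]; push_cast; ring
  map_smul' c s := by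
    ext t
    simp only [LinearMap.coe_toContinuousLinearMap', RingHom.id_apply,
      ContinuousLinearMap.coe_smul', Pi.smul_apply, bcInner, LinearMap.coe_mk, AddHom.coe_mk,
      smul_eq_mul]
    rw [pairing_smul_left]; push_cast
    rw [Complex.real_smul]; push_cast; ring

/-- The continuous bilinear map `(s, t) ↦ I * (pairing θ s t / 2)`. -/
def bcCLM : Ed d →L[ℝ] Ed d →L[ℝ] ℂ := LinearMap.toContinuousLinearMap (bcLin θ)

@[simp] lemma bcCLM_apply (s t : Ed d) :
    bcCLM θ s t = Complex.I * ((pairing θ s t / 2 : ℝ) : ℂ) := rfl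

lemma bcCLM_re (s t : Ed d) : (bcCLM θ s t).re = 0 := by
  simp

end TCAux

namespace TCAux2

open TCAux ContinuousLinearMap

variable {E F : Type*} [NormedAddCommGroup E] [NormedSpace ℝ E]
  [NormedAddCommGroup F] [NormedSpace ℝ F]

lemma hasTemperateGrowth_cexp_bilin (B : E →L[ℝ] F →L[ℝ] ℂ) (h0 : ∀ x y, (B x y).re = 0) :
    Function.HasTemperateGrowth fun p : E × F => Complex.exp (B p.1 p.2) := by
  have hb : IsBoundedBilinearMap ℝ fun p : E × F => B p.1 p.2 := B.isBoundedBilinearMap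
  set Φ : E × F → ℂ := fun p => Complex.exp (B p.1 p.2) with hΦ
  set D : (E × F) →L[ℝ] ((E × F) →L[ℝ] ℂ) := B.deriv₂ with hDdef
  set Bs : ℂ →L[ℝ] ((E × F) →L[ℝ] ℂ) →L[ℝ] ((E × F) →L[ℝ] ℂ) := ContinuousLinearMap.lsmul ℝ ℂ
    with hBs
  have hsm : ContDiff ℝ ∞ Φ := Complex.contDiff_exp.comp hb.contDiff
  have hnorm : ∀ p : E × F, ‖Φ p‖ = 1 := by
    intro p
    rw [hΦ, Complex.norm_exp, h0, Real.exp_zero]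
  have hder : ∀ p : E × F, HasFDerivAt Φ (Complex.exp (B p.1 p.2) • D p) p := by
    intro p
    exact (hb.hasFDerivAt p).cexp
  have hfderiv : fderiv ℝ Φ = fun p => Bs (Φ p) (D p) := by
    funext p
    rw [(hder p).fderiv]
    rfl
  have key : ∀ n : ℕ, ∃ (k : ℕ) (C : ℝ), 0 ≤ C ∧ ∀ i ≤ n, ∀ p : E × F,
      ‖iteratedFDeriv ℝ i Φ p‖ ≤ C * (1 + ‖p‖) ^ k := by
    intro n
    induction n with
    | zero =>
      refine ⟨0, 1, zero_le_one, ?_⟩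
      intro i hi p
      rw [Nat.le_zero] at hi
      subst hi
      rw [norm_iteratedFDeriv_zero, hnorm p]
      simp
    | succ n ih =>
      obtain ⟨k, C, hC0, hC⟩ := ih
      obtain ⟨k', C', hC'0, hC'⟩ := Function.HasTemperateGrowth.norm_iteratedFDeriv_le_uniform (D.hasTemperateGrowth) n
      refine ⟨k + k', max C (‖Bs‖ * 2 ^ n * (C * C')), le_max_of_le_left hC0, ?_⟩
      intro i hi p
      have hp1 : (1:ℝ) ≤ 1 + ‖p‖ := by linarith [norm_nonneg p]
      have hCmax : C ≤ max C (‖Bs‖ * 2 ^ n * (C * C')) := le_max_left _ _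
      by_cases hin : i ≤ n
      · calc ‖iteratedFDeriv ℝ i Φ p‖ ≤ C * (1 + ‖p‖) ^ k := hC i hin p
          _ ≤ max C (‖Bs‖ * 2 ^ n * (C * C')) * (1 + ‖p‖) ^ (k + k') :=
              mul_le_mul hCmax (pow_le_pow_right₀ hp1 (by omega)) (by positivity)
                (le_trans hC0 hCmax)
      · have hieq : i = n + 1 := by omega
        subst hieq
        calc ‖iteratedFDeriv ℝ (n + 1) Φ p‖
            = ‖iteratedFDeriv ℝ n (fderiv ℝ Φ) p‖ := (norm_iteratedFDeriv_fderiv).symm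
          _ = ‖iteratedFDeriv ℝ n (fun q => Bs (Φ q) (D q)) p‖ := by rw [hfderiv]
          _ ≤ ‖Bs‖ * ∑ j ∈ Finset.range (n + 1), (n.choose j : ℝ) *
                ‖iteratedFDeriv ℝ j Φ p‖ * ‖iteratedFDeriv ℝ (n - j) (⇑D) p‖ :=
              Bs.norm_iteratedFDeriv_le_of_bilinear hsm D.contDiff p (by exact_mod_cast le_top)
          _ ≤ ‖Bs‖ * ∑ j ∈ Finset.range (n + 1), (n.choose j : ℝ) *
                (C * (1 + ‖p‖) ^ k) * (C' * (1 + ‖p‖) ^ k') := by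
              refine mul_le_mul_of_nonneg_left (Finset.sum_le_sum ?_) (norm_nonneg _)
              intro j hj
              have h1 := hC j (Finset.mem_range_succ_iff.mp hj) p
              have h2 := hC' (n - j) (by omega) p
              have hnn : (0:ℝ) ≤ (n.choose j : ℝ) * (C * (1 + ‖p‖) ^ k) :=
                mul_nonneg (Nat.cast_nonneg _) (mul_nonneg hC0 (by positivity))
              exact mul_le_mul (mul_le_mul le_rfl h1 (norm_nonneg _) (Nat.cast_nonneg _))
                h2 (norm_nonneg _) hnn
          _ = ‖Bs‖ * 2 ^ n * (C * C') * (1 + ‖p‖) ^ (k + k') := by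
              rw [← Finset.sum_mul, ← Finset.sum_mul]
              norm_cast
              rw [Nat.sum_range_choose]
              push_cast
              ring
          _ ≤ max C (‖Bs‖ * 2 ^ n * (C * C')) * (1 + ‖p‖) ^ (k + k') :=
              mul_le_mul_of_nonneg_right (le_max_right _ _) (by positivity)
  refine ⟨hsm, fun n => ?_⟩
  obtain ⟨k, C, _, h⟩ := key n
  exact ⟨k, C, fun p => h n le_rfl p⟩

end TCAux2

namespace TCAux3

open SchwartzMap

section Postcomp

variable {E V W : Type*} [NormedAddCommGroup E] [NormedSpace ℝ E]
  [NormedAddCommGroup V] [NormedSpace ℝ V] [NormedAddCommGroup W] [NormedSpace ℝ W]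

/-- Postcomposition of a Schwartz map with a continuous linear map. -/
def postcomp (T : V →L[ℝ] W) (u : 𝓢(E, V)) : 𝓢(E, W) :=
  SchwartzMap.bilinLeftCLM ((ContinuousLinearMap.lsmul ℝ ℝ : ℝ →L[ℝ] W →L[ℝ] W).flip.comp T)
    (Function.HasTemperateGrowth.const (1 : ℝ)) u

@[simp] lemma postcomp_apply (T : V →L[ℝ] W) (u : 𝓢(E, V)) (x : E) :
    postcomp T u x = T (u x) := one_smul ℝ (T (u x))

end Postcomp

section Tensor

variable {d : ℕ}

lemma norm_le_aux (p : Ed d × Ed d) (k : ℕ) :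
    ‖p‖ ^ k ≤ (1 + ‖p.1‖) ^ k * (1 + ‖p.2‖) ^ k := by
  rw [← mul_pow]
  refine pow_le_pow_left₀ (norm_nonneg p) ?_ k
  rw [Prod.norm_def]
  refine max_le ?_ ?_ <;> nlinarith [norm_nonneg p.1, norm_nonneg p.2]

lemma iteratedFDeriv_fst_le (f : 𝓢(Ed d, ℂ)) (j : ℕ) (p : Ed d × Ed d) :
    ‖iteratedFDeriv ℝ j (fun q : Ed d × Ed d => f q.1) p‖ ≤ ‖iteratedFDeriv ℝ j f p.1‖ := by
  have hcomp : (fun q : Ed d × Ed d => f q.1)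
      = (⇑f ∘ ⇑(ContinuousLinearMap.fst ℝ (Ed d) (Ed d))) := rfl
  rw [hcomp, ContinuousLinearMap.iteratedFDeriv_comp_right _ (f.smooth ⊤) p
    (by exact_mod_cast le_top)]
  refine (ContinuousMultilinearMap.norm_compContinuousLinearMap_le _ _).trans ?_
  refine mul_le_of_le_one_right (norm_nonneg _) ?_
  exact Finset.prod_le_one (fun _ _ => norm_nonneg _)
    (fun _ _ => ContinuousLinearMap.norm_fst_le _ _ _)

lemma iteratedFDeriv_snd_le (g : 𝓢(Ed d, ℂ)) (j : ℕ) (p : Ed d × Ed d) :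
    ‖iteratedFDeriv ℝ j (fun q : Ed d × Ed d => g q.2) p‖ ≤ ‖iteratedFDeriv ℝ j g p.2‖ := by
  have hcomp : (fun q : Ed d × Ed d => g q.2)
      = (⇑g ∘ ⇑(ContinuousLinearMap.snd ℝ (Ed d) (Ed d))) := rfl
  rw [hcomp, ContinuousLinearMap.iteratedFDeriv_comp_right _ (g.smooth ⊤) p
    (by exact_mod_cast le_top)]
  refine (ContinuousMultilinearMap.norm_compContinuousLinearMap_le _ _).trans ?_
  refine mul_le_of_le_one_right (norm_nonneg _) ?_
  exact Finset.prod_le_one (fun _ _ => norm_nonneg _)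
    (fun _ _ => ContinuousLinearMap.norm_snd_le _ _ _)

/-- The tensor product of two Schwartz functions is Schwartz on the product space. -/
def tensorS (f g : 𝓢(Ed d, ℂ)) : 𝓢(Ed d × Ed d, ℂ) where
  toFun p := f p.1 * g p.2
  smooth' := (f.smooth'.comp contDiff_fst).mul (g.smooth'.comp contDiff_snd)
  decay' := by
    intro k n
    set sF : ℝ := 2 ^ k * (Finset.Iic (k, n)).sup (schwartzSeminormFamily ℝ (Ed d) ℂ) f with hsF
    set sG : ℝ := 2 ^ k * (Finset.Iic (k, n)).sup (schwartzSeminormFamily ℝ (Ed d) ℂ) g with hsG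
    have hsF0 : 0 ≤ sF := by
      rw [hsF]; positivity
    have hsG0 : 0 ≤ sG := by
      rw [hsG]; positivity
    refine ⟨2 ^ n * (sF * sG), fun p => ?_⟩
    have hf1 : ContDiff ℝ ∞ (fun q : Ed d × Ed d => f q.1) := f.smooth'.comp contDiff_fst
    have hg2 : ContDiff ℝ ∞ (fun q : Ed d × Ed d => g q.2) := g.smooth'.comp contDiff_snd
    calc ‖p‖ ^ k * ‖iteratedFDeriv ℝ n (fun q : Ed d × Ed d => f q.1 * g q.2) p‖
        ≤ ((1 + ‖p.1‖) ^ k * (1 + ‖p.2‖) ^ k) *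
            ‖iteratedFDeriv ℝ n (fun q : Ed d × Ed d => f q.1 * g q.2) p‖ :=
          mul_le_mul_of_nonneg_right (norm_le_aux p k) (norm_nonneg _)
      _ ≤ ((1 + ‖p.1‖) ^ k * (1 + ‖p.2‖) ^ k) * ∑ j ∈ Finset.range (n + 1), (n.choose j : ℝ) *
            ‖iteratedFDeriv ℝ j (fun q : Ed d × Ed d => f q.1) p‖ *
            ‖iteratedFDeriv ℝ (n - j) (fun q : Ed d × Ed d => g q.2) p‖ :=
          mul_le_mul_of_nonneg_left
            (norm_iteratedFDeriv_mul_le hf1 hg2 p (by exact_mod_cast le_top)) (by positivity)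
      _ = ∑ j ∈ Finset.range (n + 1), (n.choose j : ℝ) *
            ((1 + ‖p.1‖) ^ k * ‖iteratedFDeriv ℝ j (fun q : Ed d × Ed d => f q.1) p‖) *
            ((1 + ‖p.2‖) ^ k * ‖iteratedFDeriv ℝ (n - j) (fun q : Ed d × Ed d => g q.2) p‖) := by
          rw [Finset.mul_sum]
          exact Finset.sum_congr rfl fun j _ => by ring
      _ ≤ ∑ j ∈ Finset.range (n + 1), (n.choose j : ℝ) * sF * sG := by
          refine Finset.sum_le_sum fun j hj => ?_
          have hjn : j ≤ n := Finset.mem_range_succ_iff.mp hj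
          have e1 : (1 + ‖p.1‖) ^ k * ‖iteratedFDeriv ℝ j (fun q : Ed d × Ed d => f q.1) p‖
              ≤ sF :=
            (mul_le_mul_of_nonneg_left (iteratedFDeriv_fst_le f j p) (by positivity)).trans
              (one_add_le_sup_seminorm_apply (m := (k, n)) le_rfl hjn f p.1)
          have e2 : (1 + ‖p.2‖) ^ k *
              ‖iteratedFDeriv ℝ (n - j) (fun q : Ed d × Ed d => g q.2) p‖ ≤ sG :=
            (mul_le_mul_of_nonneg_left (iteratedFDeriv_snd_le g (n - j) p) (by positivity)).trans
              (one_add_le_sup_seminorm_apply (m := (k, n)) le_rfl (by omega) g p.2)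
          have h1 : (0:ℝ) ≤ (1 + ‖p.1‖) ^ k *
              ‖iteratedFDeriv ℝ j (fun q : Ed d × Ed d => f q.1) p‖ := by positivity
          have h2 : (0:ℝ) ≤ (1 + ‖p.2‖) ^ k *
              ‖iteratedFDeriv ℝ (n - j) (fun q : Ed d × Ed d => g q.2) p‖ := by positivity
          exact mul_le_mul (mul_le_mul le_rfl e1 h1 (Nat.cast_nonneg _)) e2 h2
            (mul_nonneg (Nat.cast_nonneg _) hsF0)
      _ = 2 ^ n * (sF * sG) := by
          rw [← Finset.sum_mul, ← Finset.sum_mul]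
          norm_cast
          rw [Nat.sum_range_choose]
          push_cast
          ring

@[simp] lemma tensorS_apply (f g : 𝓢(Ed d, ℂ)) (p : Ed d × Ed d) :
    tensorS f g p = f p.1 * g p.2 := rfl

/-- The shear `(s, t) ↦ (s - t, t)` as a continuous linear equivalence. -/
def shearEquiv (d : ℕ) : (Ed d × Ed d) ≃L[ℝ] (Ed d × Ed d) :=
  LinearEquiv.toContinuousLinearEquiv
    (LinearEquiv.ofLinear
      ((LinearMap.fst ℝ (Ed d) (Ed d) - LinearMap.snd ℝ (Ed d) (Ed d)).prod
        (LinearMap.snd ℝ (Ed d) (Ed d)))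
      ((LinearMap.fst ℝ (Ed d) (Ed d) + LinearMap.snd ℝ (Ed d) (Ed d)).prod
        (LinearMap.snd ℝ (Ed d) (Ed d)))
      (by
        apply LinearMap.ext
        intro p
        simp [LinearMap.prod_apply, sub_add_cancel_right])
      (by
        apply LinearMap.ext
        intro p
        simp [LinearMap.prod_apply, sub_add_cancel_right]))

@[simp] lemma shearEquiv_apply (p : Ed d × Ed d) : shearEquiv d p = (p.1 - p.2, p.2) := rfl

end Tensor

end TCAux3

namespace TCAux4

open SchwartzMap TCAux3

variable {d : ℕ} {V : Type} [NormedAddCommGroup V] [NormedSpace ℝ V]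

/-- Partial integral of a Schwartz function on a product. -/
def pint (K : 𝓢(Ed d × Ed d, V)) : Ed d → V := fun s => ∫ t : Ed d, K (s, t)

lemma uniform_decay (K : 𝓢(Ed d × Ed d, V)) (k : ℕ) :
    ∃ C : ℝ, 0 ≤ C ∧ ∀ (s t : Ed d),
      (1 + ‖s‖) ^ k * ‖K (s, t)‖ ≤ C * (1 + ‖t‖) ^ (-((d : ℝ) + 1)) := by
  refine ⟨2 ^ (k + (d + 1)) *
    (Finset.Iic (k + (d + 1), 0)).sup (schwartzSeminormFamily ℝ (Ed d × Ed d) V) K,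
    by positivity, fun s t => ?_⟩
  have h1 : (0:ℝ) < 1 + ‖t‖ := by linarith [norm_nonneg t]
  have hc : (1 + ‖t‖) ^ (-((d:ℝ) + 1)) = ((1 + ‖t‖) ^ (d + 1 : ℕ))⁻¹ := by
    rw [Real.rpow_neg h1.le, ← Real.rpow_natCast (1 + ‖t‖) (d + 1)]
    push_cast
    ring_nf
  rw [hc, mul_comm _ (((1 + ‖t‖) ^ (d + 1 : ℕ))⁻¹), ← div_eq_inv_mul, le_div_iff₀ (by positivity)]
  have key := one_add_le_sup_seminorm_apply (𝕜 := ℝ) (m := (k + (d + 1), 0)) le_rfl le_rfl K (s, t)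
  rw [norm_iteratedFDeriv_zero] at key
  have hs : (1 + ‖s‖) ≤ 1 + ‖(s, t)‖ := by linarith [norm_fst_le (s, t)]
  have ht : (1 + ‖t‖) ≤ 1 + ‖(s, t)‖ := by linarith [norm_snd_le (s, t)]
  calc (1 + ‖s‖) ^ k * ‖K (s, t)‖ * (1 + ‖t‖) ^ (d + 1 : ℕ)
      = ((1 + ‖s‖) ^ k * (1 + ‖t‖) ^ (d + 1 : ℕ)) * ‖K (s, t)‖ := by ring
    _ ≤ ((1 + ‖(s, t)‖) ^ k * (1 + ‖(s, t)‖) ^ (d + 1 : ℕ)) * ‖K (s, t)‖ := by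
        refine mul_le_mul_of_nonneg_right ?_ (norm_nonneg _)
        exact mul_le_mul (pow_le_pow_left₀ (by positivity) hs k)
          (pow_le_pow_left₀ (by positivity) ht (d + 1)) (by positivity) (by positivity)
    _ = (1 + ‖(s, t)‖) ^ (k + (d + 1)) * ‖K (s, t)‖ := by rw [pow_add]; ring
    _ ≤ _ := key

lemma integrable_bound (C : ℝ) :
    Integrable (fun t : Ed d => C * (1 + ‖t‖) ^ (-((d:ℝ) + 1))) volume := by
  refine Integrable.const_mul ?_ C
  refine integrable_one_add_norm ?_
  rw [finrank_euclideanSpace_fin]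
  exact lt_add_one _

lemma integrable_slice (K : 𝓢(Ed d × Ed d, V)) (s : Ed d) :
    Integrable (fun t : Ed d => K (s, t)) volume := by
  obtain ⟨C, hC0, hC⟩ := uniform_decay K 0
  refine (integrable_bound C).mono' ?_ (ae_of_all _ fun t => ?_)
  · exact (K.continuous.comp (continuous_const.prodMk continuous_id)).aestronglyMeasurable
  · simpa using hC s t

/-- The kernel of the derivative of the partial integral. -/
def intKer (K : 𝓢(Ed d × Ed d, V)) : 𝓢(Ed d × Ed d, Ed d →L[ℝ] V) :=
  postcomp ((ContinuousLinearMap.compL ℝ (Ed d) (Ed d × Ed d) V).flip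
    (ContinuousLinearMap.inl ℝ (Ed d) (Ed d))) (SchwartzMap.fderivCLM ℝ (Ed d × Ed d) V K)

lemma intKer_apply (K : 𝓢(Ed d × Ed d, V)) (p : Ed d × Ed d) :
    intKer K p = (fderiv ℝ K p).comp (ContinuousLinearMap.inl ℝ (Ed d) (Ed d)) := by
  simp [intKer, SchwartzMap.fderivCLM_apply, ContinuousLinearMap.flip_apply]

lemma hasFDerivAt_pint [CompleteSpace V] (K : 𝓢(Ed d × Ed d, V)) (s : Ed d) :
    HasFDerivAt (pint K) (pint (intKer K) s) s := by
  obtain ⟨C, hC0, hC⟩ := uniform_decay (intKer K) 0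
  refine hasFDerivAt_integral_of_dominated_of_fderiv_le (F := fun x (t : Ed d) => K (x, t))
    (F' := fun x (t : Ed d) => intKer K (x, t))
    (bound := fun t : Ed d => C * (1 + ‖t‖) ^ (-((d:ℝ) + 1)))
    (Metric.ball_mem_nhds s one_pos) ?_ (integrable_slice K s) ?_ ?_ (integrable_bound C) ?_
  · exact Eventually.of_forall fun x =>
      (K.continuous.comp (continuous_const.prodMk continuous_id)).aestronglyMeasurable
  · exact ((intKer K).continuous.comp
      (continuous_const.prodMk continuous_id)).aestronglyMeasurable
  · exact ae_of_all _ fun t x _ => by simpa using hC x t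
  · refine ae_of_all _ fun t x _ => ?_
    have h1 : HasFDerivAt (⇑K) (fderiv ℝ (⇑K) (x, t)) (x, t) := K.differentiableAt.hasFDerivAt
    have h2 : HasFDerivAt (fun y : Ed d => (y, t))
        (ContinuousLinearMap.inl ℝ (Ed d) (Ed d)) x := hasFDerivAt_prodMk_left x t
    have h3 := h1.comp x h2
    show HasFDerivAt (fun y : Ed d => K (y, t)) (intKer K (x, t)) x
    rw [intKer_apply]
    exact h3

theorem pint_props (n : ℕ) :
    ∀ {V : Type} [NormedAddCommGroup V] [NormedSpace ℝ V] [CompleteSpace V]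
      (K : 𝓢(Ed d × Ed d, V)), ContDiff ℝ n (pint K) ∧
      ∀ k : ℕ, ∃ C : ℝ, ∀ s, ‖s‖ ^ k * ‖iteratedFDeriv ℝ n (pint K) s‖ ≤ C := by
  induction n with
  | zero =>
    intro V _ _ _ K
    constructor
    · have hdiff : Differentiable ℝ (pint K) :=
        fun s => (hasFDerivAt_pint K s).differentiableAt
      exact contDiff_zero.mpr hdiff.continuous
    · intro k
      obtain ⟨C, hC0, hC⟩ := uniform_decay K k
      refine ⟨∫ t : Ed d, C * (1 + ‖t‖) ^ (-((d:ℝ) + 1)), fun s => ?_⟩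
      rw [norm_iteratedFDeriv_zero]
      have h1 : (1:ℝ) ≤ 1 + ‖s‖ := by linarith [norm_nonneg s]
      calc ‖s‖ ^ k * ‖pint K s‖ ≤ (1 + ‖s‖) ^ k * ‖∫ t : Ed d, K (s, t)‖ :=
            mul_le_mul_of_nonneg_right
              (pow_le_pow_left₀ (norm_nonneg s) (by linarith) k) (norm_nonneg _)
        _ ≤ (1 + ‖s‖) ^ k * ∫ t : Ed d, ‖K (s, t)‖ :=
            mul_le_mul_of_nonneg_left (norm_integral_le_integral_norm _) (by positivity)
        _ = ∫ t : Ed d, (1 + ‖s‖) ^ k * ‖K (s, t)‖ := by rw [integral_const_mul]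
        _ ≤ ∫ t : Ed d, C * (1 + ‖t‖) ^ (-((d:ℝ) + 1)) :=
            integral_mono ((integrable_slice K s).norm.const_mul _) (integrable_bound C)
              (fun t => hC s t)
  | succ n ih =>
    intro V _ _ _ K
    have hdiff : Differentiable ℝ (pint K) := fun s => (hasFDerivAt_pint K s).differentiableAt
    have hfd : fderiv ℝ (pint K) = pint (intKer K) :=
      funext fun s => (hasFDerivAt_pint K s).fderiv
    obtain ⟨ih1, ih2⟩ := ih (K := intKer K)
    constructor
    · rw [show ((n + 1 : ℕ) : WithTop ℕ∞) = (n : WithTop ℕ∞) + 1 by push_cast; rfl,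
        contDiff_succ_iff_fderiv]
      refine ⟨hdiff, ?_, hfd ▸ ih1⟩
      intro h
      exact absurd h (by simp)
    · intro k
      obtain ⟨C, hC⟩ := ih2 k
      refine ⟨C, fun s => ?_⟩
      rw [← norm_iteratedFDeriv_fderiv, hfd]
      exact hC s

/-- Partial integration of a Schwartz function on a product gives a Schwartz function. -/
def pintS [CompleteSpace V] (K : 𝓢(Ed d × Ed d, V)) : 𝓢(Ed d, V) where
  toFun := pint K
  smooth' := contDiff_infty.mpr fun n => (pint_props n K).1
  decay' := fun k n => (pint_props n K).2 k

end TCAux4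

/-- The Schwartz space is closed under θ-twisted convolution: if `f, g` are Schwartz
functions on `ℝ^d`, then `f *_θ g` is again a Schwartz function. -/
theorem statement7 (d : ℕ) (hd : 0 < d) (θ : Matrix (Fin d) (Fin d) ℝ)
    (hθ : θ.transpose = -θ)
    (f g : SchwartzMap (Ed d) ℂ) :
    ∃ h : SchwartzMap (Ed d) ℂ, ⇑h = twistedConv θ ⇑f ⇑g := by
  have hExp : Function.HasTemperateGrowth
      fun p : Ed d × Ed d => Complex.exp (TCAux.bcCLM θ p.1 p.2) :=
    TCAux2.hasTemperateGrowth_cexp_bilin _ (TCAux.bcCLM_re θ)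
  set u : SchwartzMap (Ed d × Ed d) ℂ :=
    SchwartzMap.compCLMOfContinuousLinearEquiv (𝕜 := ℝ) (TCAux3.shearEquiv d)
      (TCAux3.tensorS f g) with hu
  set K : SchwartzMap (Ed d × Ed d) ℂ :=
    SchwartzMap.bilinLeftCLM (ContinuousLinearMap.mul ℝ ℂ) hExp u with hK
  refine ⟨TCAux4.pintS K, funext fun s => ?_⟩
  show (∫ t : Ed d, K (s, t)) = twistedConv θ (⇑f) (⇑g) s
  refine integral_congr_ae (Filter.Eventually.of_forall fun t => ?_)
  show K (s, t) = Complex.exp ((Complex.I / 2) * (pairing θ s t : ℂ)) * (f (s - t) * g t)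
  have h1 : K (s, t)
      = (f (s - t) * g t) * Complex.exp (Complex.I * ((pairing θ s t / 2 : ℝ) : ℂ)) := rfl
  rw [h1, mul_comm]
  congr 1
  push_cast
  ring
end
end

section
/- Let f be a Schwartz function on ℝ^d and let 1 ≤ k ≤ d. Let 𝒟_k denote the operator of multiplication by the k-th coordinate, (𝒟_k ξ)(r) = r_k ξ(r). Then for every Schwartz function ξ on ℝ^d, the commutator identity 𝒟_k(U(f)ξ) − U(f)(𝒟_k ξ) = U(f_k) ξ holds, where f_k(t) = t_k f(t); that is, [𝒟_k, U(f)] = U(t_k f(t)) on the Schwartz space. -/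
open MeasureTheory Complex Filter

noncomputable section

/-- `U(f)` acting pointwise on functions: `(U(f)ξ)(s) = ∫ f(t) (U(t)ξ)(s) dt`. -/
def UfFun {d : ℕ} (θ : Matrix (Fin d) (Fin d) ℝ) (f ξ : Ed d → ℂ) : Ed d → ℂ :=
  fun s => ∫ t : Ed d, f t * weyl θ t ξ s ∂volume

lemma coord_le {d : ℕ} (r : Ed d) (k : Fin d) : |r k| ≤ ‖r‖ := by
  rw [EuclideanSpace.norm_eq, ← Real.sqrt_sq_eq_abs]
  apply Real.sqrt_le_sqrt
  have : (r k)^2 = ‖r k‖^2 := by rw [Real.norm_eq_abs, _root_.sq_abs]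
  rw [this]
  exact Finset.single_le_sum (fun (i : Fin d) _ => sq_nonneg ‖r i‖) (Finset.mem_univ k)

lemma norm_exp_pairing {d : ℕ} (θ : Matrix (Fin d) (Fin d) ℝ) (t r : Ed d) :
    ‖Complex.exp (-(Complex.I / 2) * (pairing θ t r : ℂ))‖ = 1 := by
  rw [Complex.norm_exp]
  simp

lemma integrable_aux {d : ℕ} (θ : Matrix (Fin d) (Fin d) ℝ) (f : SchwartzMap (Ed d) ℂ)
    (ξ : Ed d → ℂ) (hξc : Continuous ξ) (C : ℝ) (hC : ∀ r, ‖ξ r‖ ≤ C) (s : Ed d) :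
    Integrable (fun t => f t * weyl θ t ξ s) volume := by
  have hcont : Continuous (fun t : Ed d => f t * weyl θ t ξ s) := by
    apply f.continuous.mul
    unfold weyl
    apply Continuous.mul
    · apply Complex.continuous_exp.comp
      apply Continuous.mul continuous_const
      apply Complex.continuous_ofReal.comp
      unfold pairing
      exact continuous_finset_sum _ fun i _ =>
        ((continuous_apply i).comp (PiLp.continuous_ofLp 2 _)).mul continuous_const
    · exact hξc.comp (continuous_const.sub continuous_id)
  apply Integrable.mono' ((f.integrable).norm.const_mul C) hcont.aestronglyMeasurable
  filter_upwards with t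
  rw [norm_mul]
  unfold weyl
  rw [norm_mul, norm_exp_pairing, one_mul]
  calc ‖f t‖ * ‖ξ (s - t)‖ ≤ ‖f t‖ * C := by
        exact mul_le_mul_of_nonneg_left (hC _) (norm_nonneg _)
    _ = C * ‖f t‖ := mul_comm _ _

/-- For Schwartz `f` and `ξ`, the commutator of the coordinate multiplication operator
`𝒟_k` with `U(f)` satisfies `𝒟_k(U(f)ξ) − U(f)(𝒟_k ξ) = U(t_k f(t)) ξ`. -/
theorem statement11 (d : ℕ) (hd : 0 < d) (θ : Matrix (Fin d) (Fin d) ℝ)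
    (hθ : θ.transpose = -θ) (k : Fin d)
    (f ξ : SchwartzMap (Ed d) ℂ) :
    ∀ s : Ed d,
      (s k : ℂ) * UfFun θ ⇑f ⇑ξ s - UfFun θ ⇑f (fun r => (r k : ℂ) * ξ r) s
        = UfFun θ (fun t => (t k : ℂ) * f t) ⇑ξ s := by
  intro s
  obtain ⟨C0, hC0⟩ := ξ.decay 0 0
  obtain ⟨C1, hC1⟩ := ξ.decay 1 0
  have hb0 : ∀ r, ‖(ξ : Ed d → ℂ) r‖ ≤ C0 := by
    intro r
    have := hC0.2 r
    simpa [norm_iteratedFDeriv_zero] using this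
  have hb1 : ∀ r, ‖(r k : ℂ) * ξ r‖ ≤ C1 := by
    intro r
    have h := hC1.2 r
    rw [norm_iteratedFDeriv_zero, pow_one] at h
    rw [norm_mul, Complex.norm_real, Real.norm_eq_abs]
    calc |r k| * ‖ξ r‖ ≤ ‖r‖ * ‖ξ r‖ :=
        mul_le_mul_of_nonneg_right (coord_le r k) (norm_nonneg _)
      _ ≤ C1 := h
  have h1 : Integrable (fun t => f t * weyl θ t (⇑ξ) s) volume :=
    integrable_aux θ f _ ξ.continuous C0 hb0 s
  have h2 : Integrable (fun t => f t * weyl θ t (fun r => (r k : ℂ) * ξ r) s) volume :=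
    integrable_aux θ f _ ((Complex.continuous_ofReal.comp
      ((continuous_apply k).comp (PiLp.continuous_ofLp 2 _))).mul ξ.continuous) C1 hb1 s
  unfold UfFun
  rw [← MeasureTheory.integral_const_mul, ← integral_sub (h1.const_mul _) h2]
  apply integral_congr_ae
  filter_upwards with t
  unfold weyl
  have hst : ((s - t) k : ℂ) = (s k : ℂ) - (t k : ℂ) := by
    push_cast [PiLp.sub_apply]
    ring
  beta_reduce
  rw [hst]
  ring
end
end

section
/- Let ψ be a Schwartz function on ℝ^d with ∫_{ℝ^d} ψ(t) dt = 1, and set ψ_ε(t) = ε^{−d} ψ(t/ε) for ε > 0. Then for every Schwartz function f on ℝ^d, the θ-twisted convolutions ψ_ε *_θ f converge to f uniformly on ℝ^d as ε → 0⁺; that is, sup_{t ∈ ℝ^d} |(ψ_ε *_θ f)(t) − f(t)| → 0. -/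
open MeasureTheory Complex Filter

noncomputable section

/-- The mollifier rescaling `ψ_ε(t) = ε^{−d} ψ(t/ε)`. -/
def mollify {d : ℕ} (ψ : Ed d → ℂ) (ε : ℝ) : Ed d → ℂ :=
  fun t => (((ε ^ d)⁻¹ : ℝ) : ℂ) * ψ (ε⁻¹ • t)

variable {d : ℕ} (θ : Matrix (Fin d) (Fin d) ℝ)

lemma pairing_sub (s a b : Ed d) : pairing θ s (a - b) = pairing θ s a - pairing θ s b := by
  unfold pairing
  simp only [PiLp.sub_apply, mul_sub, Finset.sum_sub_distrib]

lemma pairing_smul (s : Ed d) (c : ℝ) (u : Ed d) :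
    pairing θ s (c • u) = c * pairing θ s u := by
  unfold pairing
  simp only [PiLp.smul_apply, smul_eq_mul, Finset.mul_sum]
  congr 1; ext i; congr 1; ext j; ring

lemma pairing_self (hθ : θ.transpose = -θ) (s : Ed d) : pairing θ s s = 0 := by
  have h : ∀ i j, θ j i = -θ i j := by
    intro i j
    have := congrFun (congrFun hθ i) j
    simpa [Matrix.transpose_apply] using this
  have key : ∀ j i, s i * (θ i j * s j) = -(s j * (θ j i * s i)) := by
    intro j i; rw [h i j]; ring
  have h2 : pairing θ s s = -pairing θ s s := by
    unfold pairing
    simp only [Finset.mul_sum]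
    calc (∑ i, ∑ j, s i * (θ i j * s j)) = ∑ j, ∑ i, s i * (θ i j * s j) := Finset.sum_comm
      _ = ∑ j, ∑ i, -(s j * (θ j i * s i)) :=
          Finset.sum_congr rfl fun j _ => Finset.sum_congr rfl fun i _ => key j i
      _ = -∑ j, ∑ i, s j * (θ j i * s i) := by simp
  linarith

lemma coord_abs_le_norm (u : Ed d) (j : Fin d) : |u j| ≤ ‖u‖ := by
  rw [EuclideanSpace.norm_eq, ← Real.sqrt_sq_eq_abs]
  apply Real.sqrt_le_sqrt
  have := Finset.single_le_sum (f := fun i => ‖u i‖ ^ 2) (fun i _ => sq_nonneg _)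
    (Finset.mem_univ j)
  simpa [Real.norm_eq_abs, sq_abs] using this

lemma pairing_bound (s u : Ed d) :
    |pairing θ s u| ≤ (∑ i, ∑ j, |θ i j|) * (‖s‖ * ‖u‖) := by
  unfold pairing
  calc |∑ i, s i * ∑ j, θ i j * u j| ≤ ∑ i, |s i * ∑ j, θ i j * u j| :=
        Finset.abs_sum_le_sum_abs _ _
    _ ≤ ∑ i, ‖s‖ * (∑ j, |θ i j| * ‖u‖) := by
        apply Finset.sum_le_sum
        intro i _
        rw [abs_mul]
        apply mul_le_mul (coord_abs_le_norm s i) ?_ (abs_nonneg _) (norm_nonneg _)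
        calc |∑ j, θ i j * u j| ≤ ∑ j, |θ i j * u j| := Finset.abs_sum_le_sum_abs _ _
          _ ≤ ∑ j, |θ i j| * ‖u‖ := by
              apply Finset.sum_le_sum
              intro j _
              rw [abs_mul]
              exact mul_le_mul_of_nonneg_left (coord_abs_le_norm u j) (abs_nonneg _)
    _ = (∑ i, ∑ j, |θ i j|) * (‖s‖ * ‖u‖) := by
        rw [Finset.sum_mul]
        congr 1; ext i
        rw [← Finset.sum_mul]; ring

lemma pairing_continuous (s : Ed d) : Continuous (fun u => pairing θ s u) := by
  unfold pairing
  exact continuous_finset_sum _ fun i _ => continuous_const.mul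
    (continuous_finset_sum _ fun j _ => continuous_const.mul (EuclideanSpace.proj j).continuous)

lemma norm_exp_mul_I_sub_one_le (x : ℝ) : ‖Complex.exp (↑x * Complex.I) - 1‖ ≤ |x| := by
  rw [Complex.exp_mul_I]
  have h : Complex.cos ↑x + Complex.sin ↑x * Complex.I - 1
      = ((Real.cos x - 1 : ℝ) : ℂ) + ((Real.sin x : ℝ) : ℂ) * Complex.I := by
    push_cast [← Complex.ofReal_cos, ← Complex.ofReal_sin]
    ring
  rw [h, Complex.norm_add_mul_I]
  have hb : (Real.cos x - 1) ^ 2 + Real.sin x ^ 2 ≤ x ^ 2 := by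
    have h1 := Real.sin_sq_add_cos_sq x
    have h2 := Real.one_sub_sq_div_two_le_cos (x := x)
    nlinarith
  calc Real.sqrt ((Real.cos x - 1) ^ 2 + Real.sin x ^ 2) ≤ Real.sqrt (x ^ 2) :=
        Real.sqrt_le_sqrt hb
    _ = |x| := Real.sqrt_sq_eq_abs x

lemma stepA {d : ℕ} (θ : Matrix (Fin d) (Fin d) ℝ) (hθ : θ.transpose = -θ)
    (ψ f : Ed d → ℂ) {ε : ℝ} (hε : 0 < ε) (s : Ed d) :
    twistedConv θ (mollify ψ ε) f s
      = ∫ u : Ed d, Complex.exp (-(Complex.I / 2) * ((ε * pairing θ s u : ℝ) : ℂ))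
          * (ψ u * f (s - ε • u)) ∂volume := by
  set F : Ed d → ℂ := fun t =>
    Complex.exp ((Complex.I / 2) * (pairing θ s t : ℂ)) * (mollify ψ ε (s - t) * f t) with hF
  set K : Ed d → ℂ := fun u =>
    Complex.exp (-(Complex.I / 2) * ((ε * pairing θ s u : ℝ) : ℂ)) * (ψ u * f (s - ε • u))
    with hK
  have h1 : twistedConv θ (mollify ψ ε) f s = ∫ t, F (s - t) ∂volume := by
    rw [twistedConv, integral_sub_left_eq_self F volume s]
  have h2 : (fun t => F (s - t)) = fun t => ((ε ^ d)⁻¹ : ℝ) • K (ε⁻¹ • t) := by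
    funext t
    have hp : pairing θ s (s - t) = -pairing θ s t := by
      rw [pairing_sub, pairing_self θ hθ]; ring
    have hp2 : ε * pairing θ s (ε⁻¹ • t) = pairing θ s t := by
      rw [pairing_smul]; field_simp
    have hst : s - (s - t) = t := by abel
    have hsm : ε • ε⁻¹ • t = t := by
      rw [smul_smul, mul_inv_cancel₀ hε.ne', one_smul]
    simp only [hF, hK, hst, hp, hp2, hsm, mollify]
    push_cast
    rw [Complex.real_smul]
    push_cast
    ring_nf
  rw [h1, h2]
  rw [integral_smul, MeasureTheory.Measure.integral_comp_inv_smul volume K ε,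
    finrank_euclideanSpace_fin, abs_of_pos (pow_pos hε d), smul_smul,
    inv_mul_cancel₀ (pow_pos hε d).ne', one_smul]


lemma norm_phase (x : ℝ) : ‖Complex.exp (-(Complex.I / 2) * (x : ℂ))‖ = 1 := by
  rw [Complex.norm_exp]
  simp [Complex.mul_re]

lemma norm_phase_sub_one (x : ℝ) :
    ‖Complex.exp (-(Complex.I / 2) * (x : ℂ)) - 1‖ ≤ |x| / 2 := by
  have h : -(Complex.I / 2) * (x : ℂ) = ((-x / 2 : ℝ) : ℂ) * Complex.I := by
    push_cast; ring
  rw [h]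
  calc ‖Complex.exp (((-x / 2 : ℝ) : ℂ) * Complex.I) - 1‖ ≤ |(-x / 2)| :=
        norm_exp_mul_I_sub_one_le _
    _ = |x| / 2 := by rw [abs_div, abs_neg]; norm_num

set_option maxHeartbeats 2000000 in
/-- If `ψ` is a Schwartz function with `∫ ψ = 1`, then for every Schwartz function `f`,
the θ-twisted convolutions `ψ_ε *_θ f` converge to `f` uniformly on `ℝ^d` as `ε → 0⁺`. -/
theorem statement13 (d : ℕ) (hd : 0 < d) (θ : Matrix (Fin d) (Fin d) ℝ)
    (hθ : θ.transpose = -θ)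
    (ψ : SchwartzMap (Ed d) ℂ) (hψ : (∫ t : Ed d, ψ t ∂volume) = 1)
    (f : SchwartzMap (Ed d) ℂ) :
    TendstoUniformly (fun ε : ℝ => twistedConv θ (mollify (⇑ψ) ε) ⇑f) ⇑f
      (nhdsWithin 0 (Set.Ioi 0)) := by
  classical
  -- constants
  obtain ⟨M, hM⟩ := f.decay' 0 0
  obtain ⟨C₁, hC₁⟩ := f.decay' 1 0
  obtain ⟨L, hL⟩ := f.decay' 0 1
  simp only [pow_zero, one_mul, pow_one, norm_iteratedFDeriv_zero] at hM hC₁ hL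
  have hM' : ∀ x, ‖f x‖ ≤ M := hM
  have hL' : ∀ x, ‖fderiv ℝ (⇑f) x‖ ≤ L := by
    intro x
    have h0 : ‖iteratedFDeriv ℝ 0 (fderiv ℝ (⇑f)) x‖ = ‖iteratedFDeriv ℝ 1 (⇑f) x‖ :=
      norm_iteratedFDeriv_fderiv
    rw [norm_iteratedFDeriv_zero] at h0
    rw [h0]; exact hL x
  have hLip : ∀ x y : Ed d, ‖f x - f y‖ ≤ L * ‖x - y‖ := by
    intro x y
    exact Convex.norm_image_sub_le_of_norm_fderiv_le
      (fun z _ => f.differentiable.differentiableAt) (fun z _ => hL' z)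
      convex_univ (Set.mem_univ y) (Set.mem_univ x)
  have hL0 : 0 ≤ L := le_trans (norm_nonneg _) (hL' 0)
  have hC₁0 : 0 ≤ C₁ := le_trans (mul_nonneg (norm_nonneg _) (norm_nonneg _)) (hC₁ 0)
  set Cθ : ℝ := ∑ i, ∑ j, |θ i j| with hCθ
  have hCθ0 : 0 ≤ Cθ :=
    Finset.sum_nonneg fun i _ => Finset.sum_nonneg fun j _ => abs_nonneg _
  set Cc : ℝ := L + Cθ * C₁ / 2 with hCc
  have hCc0 : 0 ≤ Cc := by positivity
  have hint : Integrable (fun u : Ed d => ‖u‖ ^ 1 * ‖ψ u‖) volume :=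
    ψ.integrable_pow_mul volume 1
  set B : ℝ := Cc * ∫ u : Ed d, ‖u‖ ^ 1 * ‖ψ u‖ ∂volume with hB
  have hB0 : 0 ≤ B := by
    apply mul_nonneg hCc0
    exact integral_nonneg fun u => mul_nonneg (by positivity) (norm_nonneg _)
  -- main estimate
  have key : ∀ ε : ℝ, 0 < ε → ∀ s : Ed d,
      ‖twistedConv θ (mollify (⇑ψ) ε) (⇑f) s - f s‖ ≤ ε * B := by
    intro ε hε s
    rw [stepA θ hθ (⇑ψ) (⇑f) hε s]
    set K : Ed d → ℂ := fun u =>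
      Complex.exp (-(Complex.I / 2) * ((ε * pairing θ s u : ℝ) : ℂ)) * (ψ u * f (s - ε • u))
      with hK
    have hKc : Continuous K := by
      apply Continuous.mul
      · exact Complex.continuous_exp.comp (continuous_const.mul
          (Complex.continuous_ofReal.comp (continuous_const.mul (pairing_continuous θ s))))
      · exact ψ.continuous.mul (f.continuous.comp
          (continuous_const.sub (continuous_id.const_smul ε)))
    have hKint : Integrable K volume := by
      apply Integrable.mono' ((ψ.integrable.norm.const_mul M))
        hKc.aestronglyMeasurable
      filter_upwards with u
      rw [hK]
      simp only
      rw [norm_mul, norm_phase, one_mul, norm_mul]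
      calc ‖ψ u‖ * ‖f (s - ε • u)‖ ≤ ‖ψ u‖ * M :=
            mul_le_mul_of_nonneg_left (hM' _) (norm_nonneg _)
        _ = M * ‖ψ u‖ := mul_comm _ _
    have hfs : (f s : ℂ) = ∫ u : Ed d, ψ u * f s ∂volume := by
      rw [MeasureTheory.integral_mul_const, hψ, one_mul]
    have hψfint : Integrable (fun u : Ed d => ψ u * f s) volume :=
      ψ.integrable.mul_const _
    rw [hfs, ← integral_sub hKint hψfint]
    have hbound : ∀ u : Ed d,
        ‖K u - ψ u * f s‖ ≤ ε * (Cc * (‖u‖ ^ 1 * ‖ψ u‖)) := by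
      intro u
      set x : ℝ := ε * pairing θ s u with hx
      set E : ℂ := Complex.exp (-(Complex.I / 2) * (x : ℂ)) with hE
      have h1 : K u - ψ u * f s = ψ u * (E * (f (s - ε • u) - f s) + (E - 1) * f s) := by
        rw [hK]; simp only; ring
      rw [h1, norm_mul]
      have h2 : ‖E * (f (s - ε • u) - f s) + (E - 1) * f s‖ ≤ ε * (‖u‖ * Cc) := by
        calc ‖E * (f (s - ε • u) - f s) + (E - 1) * f s‖
            ≤ ‖E * (f (s - ε • u) - f s)‖ + ‖(E - 1) * f s‖ := norm_add_le _ _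
          _ = ‖f (s - ε • u) - f s‖ + ‖E - 1‖ * ‖f s‖ := by
              rw [norm_mul, norm_mul, hE, norm_phase, one_mul]
          _ ≤ L * (ε * ‖u‖) + (|x| / 2) * ‖f s‖ := by
              apply add_le_add
              · have := hLip (s - ε • u) s
                have hn : ‖s - ε • u - s‖ = ε * ‖u‖ := by
                  rw [show s - ε • u - s = -(ε • u) by abel, norm_neg, norm_smul,
                    Real.norm_eq_abs, abs_of_pos hε]
                rw [hn] at this; exact this
              · exact mul_le_mul_of_nonneg_right (norm_phase_sub_one x) (norm_nonneg _)
          _ ≤ ε * (‖u‖ * Cc) := by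
              have hxb : |x| ≤ ε * (Cθ * (‖s‖ * ‖u‖)) := by
                rw [hx, abs_mul, abs_of_pos hε]
                exact mul_le_mul_of_nonneg_left (pairing_bound θ s u) hε.le
              have hfs' : ‖s‖ * ‖f s‖ ≤ C₁ := hC₁ s
              have h5 : (|x| / 2) * ‖f s‖ ≤ ε * (Cθ * (‖s‖ * ‖u‖)) / 2 * ‖f s‖ :=
                mul_le_mul_of_nonneg_right (by linarith) (norm_nonneg _)
              have h6 : ε * (Cθ * (‖s‖ * ‖u‖)) / 2 * ‖f s‖
                  = ε * ‖u‖ * Cθ * (‖s‖ * ‖f s‖) / 2 := by ring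
              have h7 : ε * ‖u‖ * Cθ * (‖s‖ * ‖f s‖) / 2 ≤ ε * ‖u‖ * Cθ * C₁ / 2 := by
                apply div_le_div_of_nonneg_right ?_ (by norm_num)
                exact mul_le_mul_of_nonneg_left hfs' (by positivity)
              rw [hCc]
              nlinarith [norm_nonneg u, hε.le, mul_nonneg (mul_nonneg hε.le (norm_nonneg u)) hCθ0]
      calc ‖ψ u‖ * ‖E * (f (s - ε • u) - f s) + (E - 1) * f s‖
          ≤ ‖ψ u‖ * (ε * (‖u‖ * Cc)) := mul_le_mul_of_nonneg_left h2 (norm_nonneg _)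
        _ = ε * (Cc * (‖u‖ ^ 1 * ‖ψ u‖)) := by ring
    calc ‖∫ u : Ed d, (K u - ψ u * f s) ∂volume‖
        ≤ ∫ u : Ed d, ε * (Cc * (‖u‖ ^ 1 * ‖ψ u‖)) ∂volume := by
          apply norm_integral_le_of_norm_le ((hint.const_mul Cc).const_mul ε)
          filter_upwards with u using hbound u
      _ = ε * B := by
          rw [hB, integral_const_mul, integral_const_mul]
  -- conclude
  rw [Metric.tendstoUniformly_iff]
  intro δ hδ
  have hη : (0 : ℝ) < δ / (B + 1) := by positivity
  filter_upwards [Ioo_mem_nhdsGT_of_mem (Set.left_mem_Ico.mpr hη)] with ε hε s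
  rw [dist_comm, dist_eq_norm]
  calc ‖twistedConv θ (mollify (⇑ψ) ε) (⇑f) s - f s‖ ≤ ε * B := key ε hε.1 s
    _ ≤ ε * (B + 1) := by nlinarith [hε.1]
    _ < (δ / (B + 1)) * (B + 1) := by
        apply mul_lt_mul_of_pos_right hε.2 (by linarith)
    _ = δ := by field_simp
end
end

section
/- Let f be a Schwartz function on ℝ^d and let x = U(f), which maps the Schwartz space S(ℝ^d) into itself. Let J be multiplication by (1 + |r|²)^{1/2} on L²(ℝ^d; ℂ), and define δ(T) = JT − TJ on S(ℝ^d), with iterates δ⁰(x) = x and δ^{k+1}(x) = δ(δ^k(x)). Then for every integer k ≥ 0, the operator δ^k(x), defined on S(ℝ^d), extends to a bounded operator on L²(ℝ^d; ℂ). -/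
open MeasureTheory Complex Filter

noncomputable section

/-- Multiplication by `(1 + |r|²)^{β/2}`, i.e. the Bessel potential power `J^β`,
acting on functions. -/
def Jpow {d : ℕ} (β : ℝ) (ξ : Ed d → ℂ) : Ed d → ℂ :=
  fun r => (((1 + ‖r‖ ^ 2) ^ (β / 2) : ℝ) : ℂ) * ξ r

/-- `L(T) = J⁻¹ (J² T − T J²)`, acting on operators on functions. -/
def Lop {d : ℕ} (A : (Ed d → ℂ) → (Ed d → ℂ)) : (Ed d → ℂ) → (Ed d → ℂ) :=
  fun ξ => Jpow (-1) (Jpow 2 (A ξ) - A (Jpow 2 ξ))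

/-- `δ(T) = J T − T J`, the commutator with `J`, acting on operators on functions. -/
def deltaOp {d : ℕ} (A : (Ed d → ℂ) → (Ed d → ℂ)) : (Ed d → ℂ) → (Ed d → ℂ) :=
  fun ξ => Jpow 1 (A ξ) - A (Jpow 1 ξ)

/-- The iterates `L^k(T)`. -/
def LIter {d : ℕ} (A : (Ed d → ℂ) → (Ed d → ℂ)) : ℕ → ((Ed d → ℂ) → (Ed d → ℂ))
  | 0 => A
  | k + 1 => Lop (LIter A k)

/-- The iterates `δ^k(T)`. -/
def deltaIter {d : ℕ} (A : (Ed d → ℂ) → (Ed d → ℂ)) : ℕ → ((Ed d → ℂ) → (Ed d → ℂ))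
  | 0 => A
  | k + 1 => deltaOp (deltaIter A k)

/-- A function on `ℝ^d` is Schwartz if it agrees with (the function underlying) an element
of the Schwartz space. -/
def IsSchwartzFun {d : ℕ} (ξ : Ed d → ℂ) : Prop :=
  ∃ g : SchwartzMap (Ed d) ℂ, ⇑g = ξ

/-- An operator, defined at the level of functions, has bounded extension to `L²` if it is
`L²`-bounded on the Schwartz space (which is dense in `L²`). -/
def HasBddExt {d : ℕ} (A : (Ed d → ℂ) → (Ed d → ℂ)) : Prop :=
  ∃ C : ℝ, ∀ ξ : SchwartzMap (Ed d) ℂ,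
    eLpNorm (A ⇑ξ) 2 volume ≤ ENNReal.ofReal C * eLpNorm (⇑ξ) 2 volume


/-- `U(f)` acting pointwise on functions: `(U(f)ξ)(s) = ∫ f(t) (U(t)ξ)(s) dt`. -/
def UfRaw {d : ℕ} (θ : Matrix (Fin d) (Fin d) ℝ) (f : Ed d → ℂ) :
    (Ed d → ℂ) → (Ed d → ℂ) :=
  fun ξ s => ∫ t : Ed d, f t * weyl θ t ξ s ∂volume

namespace Statement18Aux

variable {d : ℕ}

/-- The weight `w s = (1+‖s‖²)^{1/2}`. -/
def w (s : Ed d) : ℝ := (1 + ‖s‖ ^ 2) ^ ((1 : ℝ) / 2)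

lemma w_eq_sqrt (s : Ed d) : w s = Real.sqrt (1 + ‖s‖ ^ 2) := by
  rw [w, Real.sqrt_eq_rpow]

lemma sqrt_lip (a b : ℝ) :
    |Real.sqrt (1 + a ^ 2) - Real.sqrt (1 + b ^ 2)| ≤ |a - b| := by
  have ha := Real.sq_sqrt (by positivity : (0:ℝ) ≤ 1 + a ^ 2)
  have hb := Real.sq_sqrt (by positivity : (0:ℝ) ≤ 1 + b ^ 2)
  have ha' := Real.sqrt_nonneg (1 + a ^ 2)
  have hb' := Real.sqrt_nonneg (1 + b ^ 2)
  have h2 : |a| ≤ Real.sqrt (1 + a ^ 2) := by nlinarith [_root_.sq_abs a, abs_nonneg a]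
  have h3 : |b| ≤ Real.sqrt (1 + b ^ 2) := by nlinarith [_root_.sq_abs b, abs_nonneg b]
  have h4 : |a| - |b| ≤ |a - b| := abs_sub_abs_le_abs_sub a b
  have h5 : |b| - |a| ≤ |a - b| := by
    simpa [abs_sub_comm] using abs_sub_abs_le_abs_sub b a
  have h6 : (0:ℝ) < Real.sqrt (1 + a ^ 2) + Real.sqrt (1 + b ^ 2) := by nlinarith
  have key : (|a| - |b|) * (|a| + |b|)
      ≤ |a - b| * (Real.sqrt (1 + a ^ 2) + Real.sqrt (1 + b ^ 2)) := by
    nlinarith [abs_nonneg (a - b), abs_nonneg a, abs_nonneg b]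
  have key' : (|b| - |a|) * (|a| + |b|)
      ≤ |a - b| * (Real.sqrt (1 + a ^ 2) + Real.sqrt (1 + b ^ 2)) := by
    nlinarith [abs_nonneg (a - b), abs_nonneg a, abs_nonneg b]
  rw [abs_sub_le_iff]
  constructor <;>
    nlinarith [_root_.sq_abs a, _root_.sq_abs b, abs_nonneg (a - b), abs_nonneg a, abs_nonneg b]

lemma w_lip (s u : Ed d) : |w s - w u| ≤ ‖s - u‖ := by
  rw [w_eq_sqrt, w_eq_sqrt]
  exact (sqrt_lip ‖s‖ ‖u‖).trans (abs_norm_sub_norm_le s u)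

lemma w_continuous : Continuous (w (d := d)) := by
  have : Continuous fun s : Ed d => (1 + ‖s‖ ^ 2 : ℝ) := by continuity
  exact this.rpow_const fun s => Or.inl (by positivity)

lemma Jpow_apply (β : ℝ) (ξ : Ed d → ℂ) (r : Ed d) :
    Jpow β ξ r = (((1 + ‖r‖ ^ 2) ^ (β / 2) : ℝ) : ℂ) * ξ r := rfl

lemma Jpow_one_apply (ξ : Ed d → ℂ) (r : Ed d) :
    Jpow 1 ξ r = ((w r : ℝ) : ℂ) * ξ r := rfl

lemma Jpow_zero (ξ : Ed d → ℂ) : Jpow (0 : ℝ) ξ = ξ := by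
  funext r
  simp [Jpow]

lemma Jpow_succ (m : ℝ) (ξ : Ed d → ℂ) (r : Ed d) :
    Jpow (m + 1) ξ r = ((w r : ℝ) : ℂ) * Jpow m ξ r := by
  have hpos : (0:ℝ) < 1 + ‖r‖ ^ 2 := by positivity
  have : ((m + 1) / 2 : ℝ) = 1 / 2 + m / 2 := by ring
  rw [Jpow_apply, Jpow_apply, this, Real.rpow_add hpos]
  push_cast
  rw [w]
  ring

lemma Jpow_one_comp (m : ℝ) (ξ : Ed d → ℂ) :
    Jpow 1 (Jpow m ξ) = Jpow (m + 1) ξ := by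
  funext r
  rw [Jpow_one_apply, Jpow_succ]

/-- Uniform bound for `Jpow m` of a Schwartz function. -/
lemma Jpow_bound (m : ℕ) (g : SchwartzMap (Ed d) ℂ) :
    ∃ M : ℝ, 0 ≤ M ∧ ∀ r : Ed d, ‖Jpow (m : ℝ) ⇑g r‖ ≤ M := by
  refine ⟨2 ^ m * (Finset.Iic (m, 0)).sup (fun p => SchwartzMap.seminorm ℝ p.1 p.2) g,
    by positivity, fun r => ?_⟩
  have hpos : (0:ℝ) < 1 + ‖r‖ ^ 2 := by positivity
  have h1 : ((1 + ‖r‖ ^ 2 : ℝ) ^ ((m : ℝ) / 2)) ≤ (1 + ‖r‖) ^ m := by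
    have hle : (1 + ‖r‖ ^ 2 : ℝ) ≤ (1 + ‖r‖) ^ 2 := by nlinarith [norm_nonneg r]
    calc ((1 + ‖r‖ ^ 2 : ℝ) ^ ((m : ℝ) / 2))
        ≤ ((1 + ‖r‖) ^ 2 : ℝ) ^ ((m : ℝ) / 2) :=
          Real.rpow_le_rpow (le_of_lt hpos) hle (by positivity)
      _ = (1 + ‖r‖) ^ m := by
          rw [← Real.rpow_natCast (1 + ‖r‖ : ℝ) 2, ← Real.rpow_mul (by positivity),
            show ((2:ℕ):ℝ) * ((m:ℝ) / 2) = ((m:ℕ):ℝ) by push_cast; ring,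
            Real.rpow_natCast]
  have h2 := SchwartzMap.one_add_le_sup_seminorm_apply (𝕜 := ℝ) (m := (m, 0))
    (k := m) (n := 0) le_rfl le_rfl g r
  rw [norm_iteratedFDeriv_zero] at h2
  have h3 : ‖Jpow (m : ℝ) ⇑g r‖ = ((1 + ‖r‖ ^ 2 : ℝ) ^ ((m : ℝ) / 2)) * ‖g r‖ := by
    rw [Jpow_apply, norm_mul, Complex.norm_real, Real.norm_of_nonneg (by positivity)]
  rw [h3]
  calc ((1 + ‖r‖ ^ 2 : ℝ) ^ ((m : ℝ) / 2)) * ‖g r‖ ≤ (1 + ‖r‖) ^ m * ‖g r‖ := by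
        exact mul_le_mul_of_nonneg_right h1 (norm_nonneg _)
    _ ≤ _ := h2

lemma norm_exp_eq (c : ℝ) : ‖Complex.exp (-(Complex.I / 2) * (c : ℂ))‖ = 1 := by
  rw [Complex.norm_exp]
  have : (-(Complex.I / 2) * (c : ℂ)).re = 0 := by simp
  rw [this, Real.exp_zero]

/-- The integral kernel of `δ^k(U(f))` (without the input function). -/
def ker (θ : Matrix (Fin d) (Fin d) ℝ) (f : Ed d → ℂ) (k : ℕ) (s t : Ed d) : ℂ :=
  f t * Complex.exp (-(Complex.I / 2) * (pairing θ t s : ℂ)) *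
    (((w s : ℝ) : ℂ) - ((w (s - t) : ℝ) : ℂ)) ^ k

lemma ker_norm_le (θ : Matrix (Fin d) (Fin d) ℝ) (f : Ed d → ℂ) (k : ℕ) (s t : Ed d) :
    ‖ker θ f k s t‖ ≤ ‖f t‖ * ‖t‖ ^ k := by
  have hd : ‖(((w s : ℝ) : ℂ) - ((w (s - t) : ℝ) : ℂ))‖ = |w s - w (s - t)| := by
    rw [← Complex.ofReal_sub, Complex.norm_real, Real.norm_eq_abs]
  have hb : |w s - w (s - t)| ≤ ‖t‖ := by
    have := w_lip s (s - t)
    simpa using this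
  rw [ker, norm_mul, norm_mul, norm_exp_eq, norm_pow, hd, mul_one]
  exact mul_le_mul_of_nonneg_left (pow_le_pow_left₀ (abs_nonneg _) hb k) (norm_nonneg _)

lemma pairing_continuous (θ : Matrix (Fin d) (Fin d) ℝ) (s : Ed d) :
    Continuous fun t : Ed d => pairing θ t s := by
  unfold pairing
  exact continuous_finset_sum _ fun i _ => ((continuous_apply i).comp (PiLp.continuous_ofLp 2 _)).mul continuous_const

lemma ker_continuous (θ : Matrix (Fin d) (Fin d) ℝ) (f : SchwartzMap (Ed d) ℂ) (k : ℕ)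
    (s : Ed d) : Continuous fun t => ker θ ⇑f k s t := by
  unfold ker
  have h1 : Continuous fun t : Ed d => Complex.exp (-(Complex.I / 2) * (pairing θ t s : ℂ)) := by
    apply Complex.continuous_exp.comp
    exact continuous_const.mul (Complex.continuous_ofReal.comp (pairing_continuous θ s))
  have h2 : Continuous fun t : Ed d => (((w s : ℝ) : ℂ) - ((w (s - t) : ℝ) : ℂ)) ^ k := by
    apply Continuous.pow
    exact continuous_const.sub
      (Complex.continuous_ofReal.comp (w_continuous.comp (continuous_const.sub continuous_id)))
  exact (f.continuous.mul h1).mul h2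

lemma ker_integrable (θ : Matrix (Fin d) (Fin d) ℝ) (f : SchwartzMap (Ed d) ℂ) (k : ℕ)
    (m : ℕ) (g : SchwartzMap (Ed d) ℂ) (s : Ed d) :
    MeasureTheory.Integrable (fun t => ker θ ⇑f k s t * Jpow (m : ℝ) ⇑g (s - t)) volume := by
  obtain ⟨M, hM0, hM⟩ := Jpow_bound m g
  have hcont : Continuous fun t => ker θ ⇑f k s t * Jpow (m : ℝ) ⇑g (s - t) := by
    apply (ker_continuous θ f k s).mul
    have : Continuous (Jpow (m : ℝ) ⇑g) := by
      apply Continuous.mul _ g.continuous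
      exact Complex.continuous_ofReal.comp
        ((by continuity : Continuous fun r : Ed d => (1 + ‖r‖ ^ 2 : ℝ)).rpow_const
          fun r => Or.inl (by positivity))
    exact this.comp (continuous_const.sub continuous_id)
  have hint : MeasureTheory.Integrable (fun t : Ed d => M * (‖t‖ ^ k * ‖f t‖)) volume :=
    (f.integrable_pow_mul volume k).const_mul M
  refine hint.mono' hcont.aestronglyMeasurable (Filter.Eventually.of_forall fun t => ?_)
  rw [norm_mul]
  calc ‖ker θ ⇑f k s t‖ * ‖Jpow (m : ℝ) ⇑g (s - t)‖
      ≤ (‖f t‖ * ‖t‖ ^ k) * M := by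
        exact mul_le_mul (ker_norm_le θ ⇑f k s t) (hM _) (norm_nonneg _)
          (by positivity)
    _ = M * (‖t‖ ^ k * ‖f t‖) := by ring

/-- The kernel formula for the iterated commutators. -/
lemma formula (θ : Matrix (Fin d) (Fin d) ℝ) (f : SchwartzMap (Ed d) ℂ) :
    ∀ (k : ℕ) (m : ℕ) (g : SchwartzMap (Ed d) ℂ) (s : Ed d),
      deltaIter (UfRaw θ ⇑f) k (Jpow (m : ℝ) ⇑g) s
        = ∫ t : Ed d, ker θ ⇑f k s t * Jpow (m : ℝ) ⇑g (s - t) ∂volume := by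
  intro k
  induction k with
  | zero =>
    intro m g s
    show UfRaw θ ⇑f (Jpow (m : ℝ) ⇑g) s = _
    rw [UfRaw]
    congr 1
    funext t
    rw [weyl, ker]
    push_cast
    ring
  | succ k ih =>
    intro m g s
    show deltaOp (deltaIter (UfRaw θ ⇑f) k) (Jpow (m : ℝ) ⇑g) s = _
    have hstep : deltaOp (deltaIter (UfRaw θ ⇑f) k) (Jpow (m : ℝ) ⇑g) s
        = ((w s : ℝ) : ℂ) * deltaIter (UfRaw θ ⇑f) k (Jpow (m : ℝ) ⇑g) s
          - deltaIter (UfRaw θ ⇑f) k (Jpow ((m : ℝ) + 1) ⇑g) s := by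
      rw [deltaOp]
      rw [Pi.sub_apply, Jpow_one_apply, Jpow_one_comp]
    rw [hstep]
    have hcast : ((m : ℝ) + 1) = (((m + 1 : ℕ) : ℝ)) := by push_cast; ring
    rw [ih m g s, hcast, ih (m + 1) g s]
    rw [← MeasureTheory.integral_const_mul]
    rw [← MeasureTheory.integral_sub
      ((ker_integrable θ f k m g s).const_mul _)
      (by rw [← hcast]; exact_mod_cast ker_integrable θ f k (m + 1) g s)]
    congr 1
    funext t
    rw [← hcast, ← Jpow_one_comp, Jpow_one_apply]
    rw [ker, ker, pow_succ]
    ring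

end Statement18Aux

open scoped ENNReal

open Statement18Aux in
/-- For `x = U(f)` with `f` Schwartz, every iterated commutator `δ^k(x)` with the Bessel
potential `J` (defined on the Schwartz space) extends to a bounded operator on `L²`. -/
theorem statement18 (d : ℕ) (hd : 0 < d) (θ : Matrix (Fin d) (Fin d) ℝ)
    (hθ : θ.transpose = -θ) (f : SchwartzMap (Ed d) ℂ) :
    ∀ k : ℕ, HasBddExt (deltaIter (UfRaw θ ⇑f) k) := by
  intro k
  refine ⟨∫ t : Ed d, ‖t‖ ^ k * ‖f t‖ ∂volume, fun ξ => ?_⟩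
  set C : ℝ := ∫ t : Ed d, ‖t‖ ^ k * ‖f t‖ ∂volume with hC
  set A : ℝ≥0∞ := ENNReal.ofReal C with hA
  set H : Ed d → ℝ≥0∞ := fun t => ENNReal.ofReal (‖t‖ ^ k * ‖f t‖) with hH
  set Ξ : Ed d → ℝ≥0∞ := fun u => (‖ξ u‖₊ : ℝ≥0∞) with hΞ
  have hHm : Measurable H :=
    ENNReal.measurable_ofReal.comp ((continuous_norm.pow k).mul f.continuous.norm).measurable
  have hHt : ∀ t, H t ≠ ∞ := fun t => ENNReal.ofReal_ne_top
  have hΞm : Measurable Ξ := ξ.continuous.measurable.nnnorm.coe_nnreal_ennreal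
  have hAne : A ≠ ∞ := ENNReal.ofReal_ne_top
  -- the total mass of `H` is `A`
  have hIH : ∫⁻ t, H t ∂volume = A := by
    rw [hA, hC,
      MeasureTheory.ofReal_integral_eq_lintegral_ofReal (f.integrable_pow_mul volume k)
        (Filter.Eventually.of_forall fun t => by positivity)]
  -- kernel representation
  have hrep : deltaIter (UfRaw θ ⇑f) k ⇑ξ
      = fun s => ∫ t : Ed d, ker θ ⇑f k s t * ⇑ξ (s - t) ∂volume := by
    have h0 : (⇑ξ : Ed d → ℂ) = Jpow ((0 : ℕ) : ℝ) ⇑ξ := by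
      rw [Nat.cast_zero, Jpow_zero]
    funext s
    rw [h0]
    exact formula θ f k 0 ξ s
  -- pointwise domination of the operator by a positive convolution-type kernel
  have hpt : ∀ s : Ed d, (‖deltaIter (UfRaw θ ⇑f) k ⇑ξ s‖₊ : ℝ≥0∞)
      ≤ ∫⁻ t, H t * Ξ (s - t) ∂volume := by
    intro s
    rw [hrep]
    simp only [hH, hΞ]
    refine le_trans (enorm_integral_le_lintegral_enorm _) (lintegral_mono fun t => ?_)
    rw [enorm_mul, ← ofReal_norm (ker θ ⇑f k s t), enorm_eq_nnnorm (ξ (s - t))]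
    exact mul_le_mul_left
      (ENNReal.ofReal_le_ofReal ((ker_norm_le θ ⇑f k s t).trans_eq (mul_comm _ _))) _
  -- Cauchy–Schwarz in the `t` variable
  have hCS : ∀ s : Ed d, (∫⁻ t, H t * Ξ (s - t) ∂volume) ^ 2
      ≤ A * ∫⁻ t, H t * Ξ (s - t) ^ 2 ∂volume := by
    intro s
    have hconj : Real.HolderConjugate 2 2 := Real.HolderConjugate.two_two
    have hmeas1 : AEMeasurable (fun t => H t ^ ((1:ℝ)/2)) volume :=
      (hHm.pow_const _).aemeasurable
    have hmeas2 : AEMeasurable (fun t => H t ^ ((1:ℝ)/2) * Ξ (s - t)) volume :=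
      ((hHm.pow_const _).mul ((hΞm.comp (measurable_const.sub measurable_id)))).aemeasurable
    have hhold := ENNReal.lintegral_mul_le_Lp_mul_Lq volume hconj hmeas1 hmeas2
    have hsplit : ∀ t, H t * Ξ (s - t)
        = (H t ^ ((1:ℝ)/2)) * (H t ^ ((1:ℝ)/2) * Ξ (s - t)) := by
      intro t
      rw [← mul_assoc, ← ENNReal.rpow_add_of_nonneg _ _ (by norm_num) (by norm_num)]
      norm_num
    have h1 : ∀ t, (H t ^ ((1:ℝ)/2)) ^ (2:ℝ) = H t := by
      intro t
      rw [← ENNReal.rpow_mul]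
      norm_num
    have h2 : ∀ t, (H t ^ ((1:ℝ)/2) * Ξ (s - t)) ^ (2:ℝ) = H t * Ξ (s - t) ^ 2 := by
      intro t
      rw [ENNReal.mul_rpow_of_nonneg _ _ (by norm_num : (0:ℝ) ≤ 2), h1 t,
        show ((2:ℝ) = ((2:ℕ):ℝ)) by norm_num, ENNReal.rpow_natCast]
    simp only [Pi.mul_apply, h1, h2] at hhold
    simp only [hsplit] at hhold ⊢
    calc (∫⁻ t, (H t ^ ((1:ℝ)/2)) * (H t ^ ((1:ℝ)/2) * Ξ (s - t)) ∂volume) ^ 2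
        ≤ ((∫⁻ t, H t ∂volume) ^ ((1:ℝ)/2)
            * (∫⁻ t, H t * Ξ (s - t) ^ 2 ∂volume) ^ ((1:ℝ)/2)) ^ 2 := by
          exact pow_le_pow_left' hhold 2
      _ = A * ∫⁻ t, H t * Ξ (s - t) ^ 2 ∂volume := by
          rw [mul_pow, ← ENNReal.rpow_natCast (_ ^ ((1:ℝ)/2)) 2,
            ← ENNReal.rpow_natCast ((∫⁻ t, H t * Ξ (s - t) ^ 2 ∂volume) ^ ((1:ℝ)/2)) 2,
            ← ENNReal.rpow_mul, ← ENNReal.rpow_mul]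
          norm_num [hIH]
  -- putting it together
  have hswap : ∫⁻ s, ∫⁻ t, H t * Ξ (s - t) ^ 2 ∂volume ∂volume
      = A * ∫⁻ u, Ξ u ^ 2 ∂volume := by
    rw [MeasureTheory.lintegral_lintegral_swap]
    · have : ∀ t, ∫⁻ s, H t * Ξ (s - t) ^ 2 ∂volume = H t * ∫⁻ u, Ξ u ^ 2 ∂volume := by
        intro t
        rw [MeasureTheory.lintegral_const_mul' _ _ (hHt t),
          lintegral_sub_right_eq_self (fun u => Ξ u ^ 2) t]
      simp only [this]
      rw [MeasureTheory.lintegral_mul_const _ hHm, hIH]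
    · exact ((hHm.comp measurable_snd).mul
        ((hΞm.comp (measurable_fst.sub measurable_snd)).pow_const 2)).aemeasurable
  have key : ∫⁻ s, (‖deltaIter (UfRaw θ ⇑f) k ⇑ξ s‖₊ : ℝ≥0∞) ^ 2 ∂volume
      ≤ A ^ 2 * ∫⁻ u, Ξ u ^ 2 ∂volume := by
    calc ∫⁻ s, (‖deltaIter (UfRaw θ ⇑f) k ⇑ξ s‖₊ : ℝ≥0∞) ^ 2 ∂volume
        ≤ ∫⁻ s, A * ∫⁻ t, H t * Ξ (s - t) ^ 2 ∂volume ∂volume :=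
          lintegral_mono fun s => le_trans (pow_le_pow_left' (hpt s) 2) (hCS s)
      _ = A * ∫⁻ s, ∫⁻ t, H t * Ξ (s - t) ^ 2 ∂volume ∂volume :=
          MeasureTheory.lintegral_const_mul' _ _ hAne
      _ = A ^ 2 * ∫⁻ u, Ξ u ^ 2 ∂volume := by rw [hswap, ← mul_assoc, sq]
  -- conclude via the `L²` norm formula
  have h2ne : ((2:ℝ≥0∞)) ≠ 0 := by norm_num
  have h2top : ((2:ℝ≥0∞)) ≠ ∞ := by norm_num
  rw [MeasureTheory.eLpNorm_eq_lintegral_rpow_enorm_toReal h2ne h2top,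
    MeasureTheory.eLpNorm_eq_lintegral_rpow_enorm_toReal h2ne h2top]
  have htr : ((2:ℝ≥0∞)).toReal = (2:ℝ) := by norm_num
  rw [htr]
  have hpow2 : ∀ x : ℝ≥0∞, x ^ (2:ℝ) = x ^ 2 := fun x => by
    rw [show ((2:ℝ) = ((2:ℕ):ℝ)) by norm_num, ENNReal.rpow_natCast]
  simp only [hpow2]
  calc (∫⁻ s, (‖deltaIter (UfRaw θ ⇑f) k ⇑ξ s‖₊ : ℝ≥0∞) ^ 2 ∂volume) ^ ((1:ℝ)/2)
      ≤ (A ^ 2 * ∫⁻ u, Ξ u ^ 2 ∂volume) ^ ((1:ℝ)/2) :=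
        ENNReal.rpow_le_rpow key (by norm_num)
    _ = A * (∫⁻ u, Ξ u ^ 2 ∂volume) ^ ((1:ℝ)/2) := by
        rw [ENNReal.mul_rpow_of_nonneg _ _ (by norm_num : (0:ℝ) ≤ (1:ℝ)/2),
          ← ENNReal.rpow_natCast A 2, ← ENNReal.rpow_mul]
        norm_num
    _ = ENNReal.ofReal C * (∫⁻ u, (‖ξ u‖₊ : ℝ≥0∞) ^ 2 ∂volume) ^ ((1:ℝ)/2) := rfl
end
end

section
/- Let f be a Schwartz function on ℝ^d, let x = U(f), let α ≥ 0 be a real number, and let k ≥ 0 be an integer. Let J^β denote multiplication by (1 + |r|²)^{β/2} on L²(ℝ^d; ℂ) (which preserves the Schwartz space for every β ∈ ℝ), and let δ^k(x) be the k-th iterated commutator of x with J = J¹, defined on the Schwartz space. Then the operator [J^α, δ^k(x)] J^{1−α} = (J^α δ^k(x) − δ^k(x) J^α) J^{1−α}, defined on the Schwartz space S(ℝ^d), extends to a bounded operator on L²(ℝ^d; ℂ). -/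
open MeasureTheory Complex Filter

noncomputable section

open scoped ENNReal NNReal

namespace S19

open scoped ENNReal NNReal

variable {d : ℕ}
lemma wb_pos (r : Ed d) : (0:ℝ) < 1 + ‖r‖ ^ 2 := by positivity
lemma one_le_wb (r : Ed d) : (1:ℝ) ≤ 1 + ‖r‖ ^ 2 := by nlinarith [sq_nonneg ‖r‖]

/-- the weight `w r = (1+‖r‖²)^{1/2}` -/
def w (r : Ed d) : ℝ := (1 + ‖r‖ ^ 2) ^ ((1:ℝ)/2)

lemma one_le_w (r : Ed d) : 1 ≤ w r := Real.one_le_rpow (one_le_wb r) (by norm_num)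
lemma w_pos (r : Ed d) : 0 < w r := lt_of_lt_of_le one_pos (one_le_w r)

lemma sqrt_aux {x y c : ℝ} (hx : 0 ≤ x) (hy : 0 ≤ y) (hc : 0 ≤ c) (h : x ≤ y + c) :
    Real.sqrt (1 + x ^ 2) ≤ Real.sqrt (1 + y ^ 2) + c := by
  have hS := Real.sq_sqrt (by positivity : (0:ℝ) ≤ 1 + y ^ 2)
  have hS0 := Real.sqrt_nonneg (1 + y ^ 2)
  have hSy : y ≤ Real.sqrt (1 + y ^ 2) := by
    calc y = Real.sqrt (y ^ 2) := (Real.sqrt_sq hy).symm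
    _ ≤ _ := Real.sqrt_le_sqrt (by linarith)
  calc Real.sqrt (1 + x ^ 2) ≤ Real.sqrt ((Real.sqrt (1 + y ^ 2) + c) ^ 2) := by
        apply Real.sqrt_le_sqrt
        nlinarith [mul_le_mul_of_nonneg_right hSy hc, sq_nonneg (y + c - x)]
    _ = _ := Real.sqrt_sq (by positivity)

lemma w_eq_sqrt (r : Ed d) : w r = Real.sqrt (1 + ‖r‖ ^ 2) := by
  rw [w, Real.sqrt_eq_rpow]

lemma w_lip (a b : Ed d) : |w a - w b| ≤ ‖a - b‖ := by
  rw [w_eq_sqrt, w_eq_sqrt, abs_sub_le_iff]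
  have h1 := norm_sub_norm_le a b
  have h2 := norm_sub_norm_le b a
  rw [norm_sub_rev] at h2
  have k1 : Real.sqrt (1 + ‖a‖ ^ 2) ≤ Real.sqrt (1 + ‖b‖ ^ 2) + ‖a - b‖ :=
    sqrt_aux (norm_nonneg _) (norm_nonneg _) (norm_nonneg _) (by linarith)
  have k2 : Real.sqrt (1 + ‖b‖ ^ 2) ≤ Real.sqrt (1 + ‖a‖ ^ 2) + ‖a - b‖ :=
    sqrt_aux (norm_nonneg _) (norm_nonneg _) (norm_nonneg _) (by linarith)
  constructor <;> linarith

lemma w_sub_le (s t : Ed d) : |w s - w (s - t)| ≤ ‖t‖ := by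
  have := w_lip s (s - t)
  simpa using this

lemma jpow_apply (β : ℝ) (ξ : Ed d → ℂ) (r : Ed d) :
    Jpow β ξ r = (((1 + ‖r‖ ^ 2) ^ (β / 2) : ℝ) : ℂ) * ξ r := rfl

lemma jpow_jpow (a b : ℝ) (ξ : Ed d → ℂ) : Jpow a (Jpow b ξ) = Jpow (a + b) ξ := by
  funext r
  simp only [Jpow]
  rw [← mul_assoc, ← Complex.ofReal_mul, ← Real.rpow_add (wb_pos r),
    show a / 2 + b / 2 = (a + b) / 2 by ring]

/-- the exponential factor -/
def E {d : ℕ} (θ : Matrix (Fin d) (Fin d) ℝ) (t s : Ed d) : ℂ :=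
  Complex.exp (-(Complex.I / 2) * (pairing θ t s : ℂ))

lemma norm_E (θ : Matrix (Fin d) (Fin d) ℝ) (t s : Ed d) : ‖E θ t s‖ = 1 := by
  rw [E, Complex.norm_exp]; norm_num

lemma cont_wpow (c : ℝ) : Continuous fun r : Ed d => ((1 + ‖r‖ ^ 2) ^ c : ℝ) :=
  (continuous_const.add (continuous_norm.pow 2)).rpow_const fun r => Or.inl (wb_pos r).ne'

lemma cont_w : Continuous (w (d := d)) := cont_wpow _

lemma cont_E (θ : Matrix (Fin d) (Fin d) ℝ) :
    Continuous fun p : Ed d × Ed d => E θ p.1 p.2 := by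
  apply Complex.continuous_exp.comp
  apply Continuous.mul continuous_const
  apply Complex.continuous_ofReal.comp
  unfold pairing; fun_prop

lemma mvt_rpow {α lo hi C : ℝ} (hα : 0 ≤ α) (h1 : 1 ≤ lo) (hlh : lo ≤ hi)
    (hC : ∀ x ∈ Set.Icc lo hi, α * x ^ (α - 1) ≤ C) :
    |hi ^ α - lo ^ α| ≤ C * (hi - lo) := by
  have hmvt := Convex.norm_image_sub_le_of_norm_hasDerivWithin_le
    (f := fun x : ℝ => x ^ α) (f' := fun x : ℝ => α * x ^ (α - 1)) (s := Set.Icc lo hi)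
    (fun x hx => (Real.hasDerivAt_rpow_const
      (Or.inl (by have := hx.1; nlinarith : x ≠ 0))).hasDerivWithinAt)
    (fun x hx => by
      have hx0 : (0:ℝ) < x := by have := hx.1; linarith
      simp only [Real.norm_eq_abs]
      rw [_root_.abs_of_nonneg (by positivity)]
      exact hC x hx)
    (convex_Icc lo hi) (Set.left_mem_Icc.2 hlh) (Set.right_mem_Icc.2 hlh)
  simp only [Real.norm_eq_abs] at hmvt
  rwa [_root_.abs_of_nonneg (by linarith : (0:ℝ) ≤ hi - lo)] at hmvt

/-- The key commutator estimate: `|a^α − b^α| · b^{1−α} ≤ α c (1+c)^m`. -/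
lemma key_bound {α : ℝ} (hα : 0 ≤ α) {a b c : ℝ} (ha : 1 ≤ a) (hb : 1 ≤ b)
    (hc : |a - b| ≤ c) :
    |a ^ α - b ^ α| * b ^ (1 - α) ≤ α * c * (1 + c) ^ (⌈α⌉₊ + 1) := by
  set m : ℕ := ⌈α⌉₊ + 1 with hm
  have hc0 : 0 ≤ c := le_trans (abs_nonneg _) hc
  have h1c : (1:ℝ) ≤ 1 + c := by linarith
  have hcpow1 : (1:ℝ) ≤ (1 + c) ^ m := one_le_pow₀ h1c
  have ha0 : (0:ℝ) < a := by linarith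
  have hb0 : (0:ℝ) < b := by linarith
  have hab' : a - b ≤ c := by rw [abs_sub_le_iff] at hc; exact hc.1
  have hba' : b - a ≤ c := by rw [abs_sub_le_iff] at hc; exact hc.2
  have hbp : (0:ℝ) ≤ b ^ (α - 1) := Real.rpow_nonneg hb0.le _
  have hαm : α - 1 ≤ (m : ℝ) := by
    have := Nat.le_ceil α
    push_cast [hm]; linarith
  have h1αm : 1 - α ≤ (m : ℝ) := by
    have : (1:ℝ) ≤ (m:ℝ) := by exact_mod_cast Nat.one_le_iff_ne_zero.2 (by omega)
    linarith
  have hpowm : ∀ e : ℝ, e ≤ (m:ℝ) → (1 + c) ^ e ≤ (1 + c) ^ m := fun e he => by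
    calc (1 + c) ^ e ≤ (1 + c) ^ (m : ℝ) := Real.rpow_le_rpow_of_exponent_le h1c he
      _ = (1 + c) ^ m := Real.rpow_natCast _ m
  -- main claim
  have claim : |a ^ α - b ^ α| ≤ (α * c * (1 + c) ^ m) * b ^ (α - 1) := by
    rcases le_total α 1 with hα1 | hα1
    · rcases le_total b a with hba | hba
      · -- b ≤ a, α ≤ 1 : derivative bounded by α b^{α-1}
        have hmvt := mvt_rpow hα hb hba (C := α * b ^ (α - 1)) (fun x hx => by
          have : x ^ (α - 1) ≤ b ^ (α - 1) :=
            Real.rpow_le_rpow_of_nonpos hb0 hx.1 (by linarith)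
          exact mul_le_mul_of_nonneg_left this hα)
        calc |a ^ α - b ^ α| ≤ α * b ^ (α - 1) * (a - b) := hmvt
          _ ≤ (α * c * (1 + c) ^ m) * b ^ (α - 1) := by
              nlinarith [mul_le_mul_of_nonneg_left hab' (mul_nonneg hα hbp),
                mul_nonneg (mul_nonneg hα hc0) hbp]
      · -- a ≤ b, α ≤ 1 : derivative bounded by α a^{α-1}
        have hmvt := mvt_rpow hα ha hba (C := α * a ^ (α - 1)) (fun x hx => by
          have : x ^ (α - 1) ≤ a ^ (α - 1) :=
            Real.rpow_le_rpow_of_nonpos ha0 hx.1 (by linarith)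
          exact mul_le_mul_of_nonneg_left this hα)
        rw [abs_sub_comm] at hmvt
        have hpa : (0:ℝ) < a ^ (1 - α) := Real.rpow_pos_of_pos ha0 _
        have hpb : (0:ℝ) < b ^ (1 - α) := Real.rpow_pos_of_pos hb0 _
        have goal' : b ^ (1 - α) ≤ (1 + c) ^ (1 - α : ℝ) * a ^ (1 - α) := by
          rw [← Real.mul_rpow (by positivity) ha0.le]
          exact Real.rpow_le_rpow hb0.le (by nlinarith) (by linarith)
        have hfrac : a ^ (α - 1) ≤ (1 + c) ^ (1 - α : ℝ) * b ^ (α - 1) :=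
          calc a ^ (α - 1) = 1 / a ^ (1 - α) := by
                rw [show α - 1 = -(1 - α) by ring, Real.rpow_neg ha0.le, one_div]
            _ ≤ (1 + c) ^ (1 - α : ℝ) / b ^ (1 - α) := by
                rw [div_le_div_iff₀ hpa hpb, one_mul]; exact goal'
            _ = (1 + c) ^ (1 - α : ℝ) * b ^ (α - 1) := by
                rw [show α - 1 = -(1 - α) by ring, Real.rpow_neg hb0.le]; ring
        have hcm : (1 + c) ^ (1 - α : ℝ) ≤ (1 + c) ^ m := hpowm _ h1αm
        have hap : (0:ℝ) ≤ a ^ (α - 1) := Real.rpow_nonneg ha0.le _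
        calc |a ^ α - b ^ α| ≤ α * a ^ (α - 1) * (b - a) := hmvt
          _ ≤ (α * c * (1 + c) ^ m) * b ^ (α - 1) := by
              nlinarith [mul_le_mul_of_nonneg_left hba' (mul_nonneg hα hap),
                mul_le_mul_of_nonneg_left (le_trans hfrac
                  (mul_le_mul_of_nonneg_right hcm hbp)) (mul_nonneg hα hc0),
                mul_nonneg (mul_nonneg hα hc0) (mul_nonneg (by positivity : (0:ℝ) ≤ (1+c)^m) hbp)]
    · rcases le_total b a with hba | hba
      · -- b ≤ a, 1 ≤ α : derivative bounded by α a^{α-1}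
        have hmvt := mvt_rpow hα hb hba (C := α * a ^ (α - 1)) (fun x hx => by
          have : x ^ (α - 1) ≤ a ^ (α - 1) :=
            Real.rpow_le_rpow (by have := hx.1; linarith) hx.2 (by linarith)
          exact mul_le_mul_of_nonneg_left this hα)
        have hfrac : a ^ (α - 1) ≤ (1 + c) ^ (α - 1 : ℝ) * b ^ (α - 1) := by
          rw [← Real.mul_rpow (by positivity) hb0.le]
          exact Real.rpow_le_rpow ha0.le (by nlinarith) (by linarith)
        have hcm : (1 + c) ^ (α - 1 : ℝ) ≤ (1 + c) ^ m := hpowm _ hαm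
        calc |a ^ α - b ^ α| ≤ α * a ^ (α - 1) * (a - b) := hmvt
          _ ≤ (α * c * (1 + c) ^ m) * b ^ (α - 1) := by
              nlinarith [mul_le_mul_of_nonneg_left hab' (mul_nonneg hα
                  (Real.rpow_nonneg ha0.le (α - 1))),
                mul_le_mul_of_nonneg_left (le_trans hfrac
                  (mul_le_mul_of_nonneg_right hcm hbp)) (mul_nonneg hα hc0),
                mul_nonneg (mul_nonneg hα hc0) (mul_nonneg (by positivity : (0:ℝ) ≤ (1+c)^m) hbp)]
      · -- a ≤ b, 1 ≤ α : derivative bounded by α b^{α-1}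
        have hmvt := mvt_rpow hα ha hba (C := α * b ^ (α - 1)) (fun x hx => by
          have : x ^ (α - 1) ≤ b ^ (α - 1) :=
            Real.rpow_le_rpow (by have := hx.1; linarith) hx.2 (by linarith)
          exact mul_le_mul_of_nonneg_left this hα)
        rw [abs_sub_comm] at hmvt
        calc |a ^ α - b ^ α| ≤ α * b ^ (α - 1) * (b - a) := hmvt
          _ ≤ (α * c * (1 + c) ^ m) * b ^ (α - 1) := by
              nlinarith [mul_le_mul_of_nonneg_left hba' (mul_nonneg hα hbp),
                mul_nonneg (mul_nonneg hα hc0) hbp]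
  calc |a ^ α - b ^ α| * b ^ (1 - α)
      ≤ (α * c * (1 + c) ^ m) * b ^ (α - 1) * b ^ (1 - α) :=
        mul_le_mul_of_nonneg_right claim (Real.rpow_nonneg hb0.le _)
    _ = α * c * (1 + c) ^ m := by
        rw [mul_assoc, ← Real.rpow_add hb0, show (α - 1) + (1 - α) = 0 by ring,
          Real.rpow_zero, mul_one]

/-- Uniform bound on `Jpow β ξ` for Schwartz `ξ`. -/
lemma jpow_bound (β : ℝ) (ξ : SchwartzMap (Ed d) ℂ) :
    ∃ M : ℝ, 0 ≤ M ∧ ∀ r : Ed d, ‖Jpow β ⇑ξ r‖ ≤ M := by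
  set m : ℕ := ⌈β / 2⌉₊ with hm
  set C : ℝ := 2 ^ (2 * m) *
    ((Finset.Iic (2 * m, 0)).sup fun p => SchwartzMap.seminorm ℝ p.1 p.2) ξ with hCdef
  have hC' : ∀ r : Ed d, (1 + ‖r‖) ^ (2 * m) * ‖ξ r‖ ≤ C := by
    intro r
    have := SchwartzMap.one_add_le_sup_seminorm_apply (𝕜 := ℝ) (m := (2 * m, 0))
      le_rfl le_rfl ξ r
    rwa [norm_iteratedFDeriv_zero] at this
  have hC0 : 0 ≤ C := by
    have := hC' 0
    have h1 : (0:ℝ) ≤ (1 + ‖(0 : Ed d)‖) ^ (2 * m) * ‖ξ 0‖ := by positivity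
    linarith
  refine ⟨C, hC0, fun r => ?_⟩
  rw [jpow_apply, norm_mul, Complex.norm_real, Real.norm_eq_abs,
    _root_.abs_of_nonneg (Real.rpow_nonneg (wb_pos r).le _)]
  have h1 : (1 + ‖r‖ ^ 2 : ℝ) ^ (β / 2) ≤ (1 + ‖r‖) ^ (2 * m) := by
    calc (1 + ‖r‖ ^ 2 : ℝ) ^ (β / 2) ≤ (1 + ‖r‖ ^ 2 : ℝ) ^ (m : ℝ) :=
          Real.rpow_le_rpow_of_exponent_le (one_le_wb r) (Nat.le_ceil _)
      _ = (1 + ‖r‖ ^ 2 : ℝ) ^ m := Real.rpow_natCast _ m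
      _ ≤ ((1 + ‖r‖) ^ 2) ^ m := by
          apply pow_le_pow_left₀ (wb_pos r).le
          nlinarith [norm_nonneg r]
      _ = (1 + ‖r‖) ^ (2 * m) := by rw [← pow_mul]
  calc (1 + ‖r‖ ^ 2 : ℝ) ^ (β / 2) * ‖ξ r‖ ≤ (1 + ‖r‖) ^ (2 * m) * ‖ξ r‖ :=
        mul_le_mul_of_nonneg_right h1 (norm_nonneg _)
    _ ≤ C := hC' r

/-- The generic kernel. -/
def kerF (θ : Matrix (Fin d) (Fin d) ℝ) (f : Ed d → ℂ) (k : ℕ) (β : ℝ)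
    (ξ : Ed d → ℂ) (s t : Ed d) : ℂ :=
  f t * E θ t s * ((w s - w (s - t) : ℝ) : ℂ) ^ k * Jpow β ξ (s - t)

lemma cont_E_left (θ : Matrix (Fin d) (Fin d) ℝ) (s : Ed d) :
    Continuous fun t : Ed d => E θ t s := by
  apply Complex.continuous_exp.comp
  apply Continuous.mul continuous_const
  apply Complex.continuous_ofReal.comp
  unfold pairing; fun_prop

lemma cont_sub_const (s : Ed d) : Continuous fun t : Ed d => s - t :=
  continuous_const.sub continuous_id

lemma cont_ker (θ : Matrix (Fin d) (Fin d) ℝ) (f : SchwartzMap (Ed d) ℂ) (k : ℕ) (β : ℝ)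
    (ξ : SchwartzMap (Ed d) ℂ) (s : Ed d) :
    Continuous (fun t => kerF θ (⇑f) k β (⇑ξ) s t) := by
  have h1 : Continuous fun t : Ed d => (f t : ℂ) := f.continuous
  have h2 := cont_E_left θ s
  have h3 : Continuous fun t : Ed d => (((w s - w (s - t) : ℝ) : ℂ)) :=
    Complex.continuous_ofReal.comp (continuous_const.sub (cont_w.comp (cont_sub_const s)))
  have h4 : Continuous fun t : Ed d => Jpow β (⇑ξ) (s - t) := by
    simp only [Jpow]
    exact (Complex.continuous_ofReal.comp ((cont_wpow (β / 2)).comp (cont_sub_const s))).mul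
      (ξ.continuous.comp (cont_sub_const s))
  exact ((h1.mul h2).mul (h3.pow k)).mul h4

lemma norm_ker_le (θ : Matrix (Fin d) (Fin d) ℝ) (f : SchwartzMap (Ed d) ℂ) (k : ℕ) (β : ℝ)
    (ξ : SchwartzMap (Ed d) ℂ) (s t : Ed d) {M : ℝ} (hM0 : 0 ≤ M)
    (hM : ∀ r : Ed d, ‖Jpow β ⇑ξ r‖ ≤ M) :
    ‖kerF θ (⇑f) k β (⇑ξ) s t‖ ≤ M * (‖t‖ ^ k * ‖f t‖) := by
  rw [kerF]
  calc ‖f t * E θ t s * ((w s - w (s - t) : ℝ) : ℂ) ^ k * Jpow β (⇑ξ) (s - t)‖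
      = ‖f t‖ * ‖E θ t s‖ * ‖((w s - w (s - t) : ℝ) : ℂ)‖ ^ k * ‖Jpow β (⇑ξ) (s - t)‖ := by
        simp [norm_mul]
    _ = ‖f t‖ * |w s - w (s - t)| ^ k * ‖Jpow β (⇑ξ) (s - t)‖ := by
        rw [norm_E, mul_one, Complex.norm_real, Real.norm_eq_abs]
    _ ≤ ‖f t‖ * ‖t‖ ^ k * M := by
        have h1 : |w s - w (s - t)| ^ k ≤ ‖t‖ ^ k :=
          pow_le_pow_left₀ (abs_nonneg _) (w_sub_le s t) k
        exact mul_le_mul (mul_le_mul_of_nonneg_left h1 (norm_nonneg (f t))) (hM _)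
          (norm_nonneg _) (by positivity)
    _ = M * (‖t‖ ^ k * ‖f t‖) := by ring

/-- Workhorse integrability of the kernel in `t`. -/
lemma integ_ker (θ : Matrix (Fin d) (Fin d) ℝ) (f : SchwartzMap (Ed d) ℂ) (k : ℕ) (β : ℝ)
    (ξ : SchwartzMap (Ed d) ℂ) (s : Ed d) :
    Integrable (fun t => kerF θ (⇑f) k β (⇑ξ) s t) volume := by
  obtain ⟨M, hM0, hM⟩ := jpow_bound (d := d) β ξ
  apply Integrable.mono' ((f.integrable_pow_mul volume k).const_mul M)
  · exact (cont_ker θ f k β ξ s).aestronglyMeasurable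
  · exact Filter.Eventually.of_forall fun t => norm_ker_le θ f k β ξ s t hM0 hM


/-- The kernel formula for iterated commutators. -/
lemma delta_ker (θ : Matrix (Fin d) (Fin d) ℝ) (f : SchwartzMap (Ed d) ℂ) (k : ℕ) :
    ∀ (β : ℝ) (ξ : SchwartzMap (Ed d) ℂ) (s : Ed d),
    deltaIter (UfRaw θ ⇑f) k (Jpow β ⇑ξ) s = ∫ t, kerF θ (⇑f) k β (⇑ξ) s t ∂volume := by
  induction k with
  | zero =>
    intro β ξ s
    show UfRaw θ (⇑f) (Jpow β ⇑ξ) s = _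
    rw [UfRaw]
    congr 1
    funext t
    simp only [weyl, kerF, E, pow_zero]
    ring
  | succ k ih =>
    intro β ξ s
    show (Jpow 1 (deltaIter (UfRaw θ ⇑f) k (Jpow β ⇑ξ))
      - deltaIter (UfRaw θ ⇑f) k (Jpow 1 (Jpow β ⇑ξ))) s = _
    rw [Pi.sub_apply, jpow_jpow 1 β]
    rw [show Jpow 1 (deltaIter (UfRaw θ ⇑f) k (Jpow β ⇑ξ)) s
        = (((1 + ‖s‖ ^ 2) ^ ((1:ℝ) / 2) : ℝ) : ℂ)
          * deltaIter (UfRaw θ ⇑f) k (Jpow β ⇑ξ) s from by rw [jpow_apply]]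
    rw [ih β ξ s, ih (1 + β) ξ s]
    rw [← integral_const_mul]
    rw [← integral_sub ((integ_ker θ f k β ξ s).const_mul _) (integ_ker θ f k (1 + β) ξ s)]
    congr 1
    funext t
    simp only [kerF, Jpow, w]
    rw [show (1 + β) / 2 = (1:ℝ) / 2 + β / 2 by ring, Real.rpow_add (wb_pos (s - t))]
    push_cast
    ring


/-- The kernel of the commutator `[J^α, δ^k(x)] J^{1-α}`. -/
def kerA (θ : Matrix (Fin d) (Fin d) ℝ) (f : Ed d → ℂ) (α : ℝ) (k : ℕ)
    (ξ : Ed d → ℂ) (s t : Ed d) : ℂ :=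
  f t * E θ t s * ((w s - w (s - t) : ℝ) : ℂ) ^ k
    * ((((1 + ‖s‖ ^ 2) ^ (α / 2) - (1 + ‖s - t‖ ^ 2) ^ (α / 2) : ℝ)) : ℂ)
    * Jpow (1 - α) ξ (s - t)

lemma kerA_eq (θ : Matrix (Fin d) (Fin d) ℝ) (f : Ed d → ℂ) (α : ℝ) (k : ℕ)
    (ξ : Ed d → ℂ) (s t : Ed d) :
    (((1 + ‖s‖ ^ 2) ^ (α / 2) : ℝ) : ℂ) * kerF θ f k (1 - α) ξ s t
      - kerF θ f k (α + (1 - α)) ξ s t = kerA θ f α k ξ s t := by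
  simp only [kerF, kerA, Jpow]
  rw [show (α + (1 - α)) / 2 = α / 2 + (1 - α) / 2 by ring,
    Real.rpow_add (wb_pos (s - t))]
  push_cast
  ring

lemma hT_formula (θ : Matrix (Fin d) (Fin d) ℝ) (f : SchwartzMap (Ed d) ℂ) (α : ℝ) (k : ℕ)
    (ξ : SchwartzMap (Ed d) ℂ) (s : Ed d) :
    (Jpow α (deltaIter (UfRaw θ ⇑f) k (Jpow (1 - α) ⇑ξ))
      - deltaIter (UfRaw θ ⇑f) k (Jpow α (Jpow (1 - α) ⇑ξ))) s
    = ∫ t, kerA θ (⇑f) α k (⇑ξ) s t ∂volume := by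
  rw [Pi.sub_apply, jpow_jpow α (1 - α), delta_ker θ f k (α + (1 - α)) ξ s,
    show Jpow α (deltaIter (UfRaw θ ⇑f) k (Jpow (1 - α) ⇑ξ)) s
      = (((1 + ‖s‖ ^ 2) ^ (α / 2) : ℝ) : ℂ)
        * deltaIter (UfRaw θ ⇑f) k (Jpow (1 - α) ⇑ξ) s from by rw [jpow_apply],
    delta_ker θ f k (1 - α) ξ s, ← integral_const_mul,
    ← integral_sub ((integ_ker θ f k (1 - α) ξ s).const_mul _)
      (integ_ker θ f k (α + (1 - α)) ξ s)]
  congr 1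
  funext t
  exact kerA_eq θ (⇑f) α k (⇑ξ) s t

/-- The dominating kernel bound function. -/
def Gb (f : Ed d → ℂ) (α : ℝ) (k m : ℕ) (t : Ed d) : ℝ :=
  ‖f t‖ * ‖t‖ ^ k * (α * ‖t‖ * (1 + ‖t‖) ^ m)

lemma Gb_nonneg {f : Ed d → ℂ} {α : ℝ} (hα : 0 ≤ α) (k m : ℕ) (t : Ed d) :
    0 ≤ Gb f α k m t :=
  mul_nonneg (by positivity) (mul_nonneg (mul_nonneg hα (norm_nonneg t)) (by positivity))

lemma norm_kerA_le (θ : Matrix (Fin d) (Fin d) ℝ) (f : SchwartzMap (Ed d) ℂ) {α : ℝ}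
    (hα : 0 ≤ α) (k : ℕ) (ξ : SchwartzMap (Ed d) ℂ) (s t : Ed d) :
    ‖kerA θ (⇑f) α k (⇑ξ) s t‖ ≤ Gb (⇑f) α k (⌈α⌉₊ + 1) t * ‖ξ (s - t)‖ := by
  have key := key_bound hα (one_le_w s) (one_le_w (s - t)) (w_sub_le s t)
  have hws : (w s) ^ α = (1 + ‖s‖ ^ 2) ^ (α / 2) := by
    rw [w, ← Real.rpow_mul (wb_pos s).le, show (1:ℝ) / 2 * α = α / 2 by ring]
  have hwst : (w (s - t)) ^ α = (1 + ‖s - t‖ ^ 2) ^ (α / 2) := by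
    rw [w, ← Real.rpow_mul (wb_pos (s - t)).le, show (1:ℝ) / 2 * α = α / 2 by ring]
  have hwst1 : (w (s - t)) ^ (1 - α) = (1 + ‖s - t‖ ^ 2) ^ ((1 - α) / 2) := by
    rw [w, ← Real.rpow_mul (wb_pos (s - t)).le, show (1:ℝ) / 2 * (1 - α) = (1 - α) / 2 by ring]
  rw [hws, hwst, hwst1] at key
  have hnorm : ‖kerA θ (⇑f) α k (⇑ξ) s t‖
      = ‖f t‖ * |w s - w (s - t)| ^ k
        * (|(1 + ‖s‖ ^ 2) ^ (α / 2) - (1 + ‖s - t‖ ^ 2) ^ (α / 2)|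
          * (1 + ‖s - t‖ ^ 2) ^ ((1 - α) / 2)) * ‖ξ (s - t)‖ := by
    simp only [kerA, Jpow, norm_mul, norm_pow, Complex.norm_real, Real.norm_eq_abs, norm_E,
      mul_one]
    rw [_root_.abs_of_nonneg (Real.rpow_nonneg (wb_pos (s - t)).le ((1 - α) / 2))]
    ring
  rw [hnorm, Gb]
  have h1 : |w s - w (s - t)| ^ k ≤ ‖t‖ ^ k :=
    pow_le_pow_left₀ (abs_nonneg _) (w_sub_le s t) k
  have h2 : (0:ℝ) ≤ α * ‖t‖ * (1 + ‖t‖) ^ (⌈α⌉₊ + 1) :=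
    mul_nonneg (mul_nonneg hα (norm_nonneg t)) (by positivity)
  apply mul_le_mul_of_nonneg_right _ (norm_nonneg _)
  calc ‖f t‖ * |w s - w (s - t)| ^ k
        * (|(1 + ‖s‖ ^ 2) ^ (α / 2) - (1 + ‖s - t‖ ^ 2) ^ (α / 2)|
          * (1 + ‖s - t‖ ^ 2) ^ ((1 - α) / 2))
      ≤ ‖f t‖ * ‖t‖ ^ k * (α * ‖t‖ * (1 + ‖t‖) ^ (⌈α⌉₊ + 1)) := by
        apply mul_le_mul (mul_le_mul_of_nonneg_left h1 (norm_nonneg _)) key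
          (mul_nonneg (abs_nonneg _) (Real.rpow_nonneg (wb_pos (s - t)).le _)) (by positivity)

lemma Gb_cont (f : SchwartzMap (Ed d) ℂ) (α : ℝ) (k m : ℕ) :
    Continuous (Gb (⇑f) α k m) := by
  unfold Gb
  exact (f.continuous.norm.mul (continuous_norm.pow k)).mul
    (((continuous_const.mul continuous_norm)).mul ((continuous_const.add continuous_norm).pow m))

lemma Gb_integrable (f : SchwartzMap (Ed d) ℂ) {α : ℝ} (hα : 0 ≤ α) (k m : ℕ) :
    Integrable (Gb (⇑f) α k m) volume := by
  apply Integrable.mono'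
    ((((f.integrable_pow_mul volume (k + 1)).add
      (f.integrable_pow_mul volume (k + 1 + m)))).const_mul (α * 2 ^ m))
  · exact (Gb_cont f α k m).aestronglyMeasurable
  · refine Filter.Eventually.of_forall fun t => ?_
    rw [Real.norm_eq_abs, _root_.abs_of_nonneg (Gb_nonneg hα k m t)]
    have hx : (1 + ‖t‖) ^ m ≤ 2 ^ m * (1 + ‖t‖ ^ m) := by
      rcases le_total ‖t‖ 1 with h | h
      · have h2 : (1 + ‖t‖) ^ m ≤ 2 ^ m := pow_le_pow_left₀ (by positivity) (by linarith) m
        nlinarith [pow_nonneg (norm_nonneg t) m, pow_nonneg (by norm_num : (0:ℝ) ≤ 2) m]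
      · have h2 : (1 + ‖t‖) ^ m ≤ (2 * ‖t‖) ^ m :=
          pow_le_pow_left₀ (by positivity) (by linarith) m
        rw [mul_pow] at h2
        nlinarith [pow_nonneg (norm_nonneg t) m, pow_nonneg (by norm_num : (0:ℝ) ≤ 2) m]
    calc Gb (⇑f) α k m t = (α * (‖t‖ ^ (k + 1) * ‖f t‖)) * (1 + ‖t‖) ^ m := by
          rw [Gb]; ring
      _ ≤ (α * (‖t‖ ^ (k + 1) * ‖f t‖)) * (2 ^ m * (1 + ‖t‖ ^ m)) :=
          mul_le_mul_of_nonneg_left hx (by positivity)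
      _ = α * 2 ^ m * (‖t‖ ^ (k + 1) * ‖f t‖ + ‖t‖ ^ (k + 1 + m) * ‖f t‖) := by
          rw [pow_add]; ring

lemma half_mul_self (x : ℝ≥0∞) : x ^ ((1:ℝ)/2) * x ^ ((1:ℝ)/2) = x := by
  rw [← sq, ← ENNReal.rpow_natCast (x ^ ((1:ℝ)/2)) 2, ← ENNReal.rpow_mul]
  norm_num

lemma mul_self_half (x : ℝ≥0∞) : (x * x) ^ ((1:ℝ)/2) = x := by
  rw [← sq, ← ENNReal.rpow_natCast x 2, ← ENNReal.rpow_mul]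
  norm_num

end S19

/-- For `x = U(f)` with `f` Schwartz, `α ≥ 0`, and `k ≥ 0`, the operator
`[J^α, δ^k(x)] J^{1−α}`, defined on the Schwartz space, extends to a bounded operator
on `L²(ℝ^d; ℂ)`. -/
theorem statement19 (d : ℕ) (hd : 0 < d) (θ : Matrix (Fin d) (Fin d) ℝ)
    (hθ : θ.transpose = -θ) (f : SchwartzMap (Ed d) ℂ) (α : ℝ) (hα : 0 ≤ α) (k : ℕ) :
    ∃ C : ℝ, ∀ ξ : SchwartzMap (Ed d) ℂ,
      eLpNorm
        (Jpow α (deltaIter (UfRaw θ ⇑f) k (Jpow (1 - α) ⇑ξ))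
          - deltaIter (UfRaw θ ⇑f) k (Jpow α (Jpow (1 - α) ⇑ξ)))
        2 volume
      ≤ ENNReal.ofReal C * eLpNorm (⇑ξ) 2 volume := by
  classical
  set m : ℕ := ⌈α⌉₊ + 1 with hm
  set G : Ed d → ℝ := S19.Gb (⇑f) α k m with hGdef
  refine ⟨∫ t, G t ∂volume, fun ξ => ?_⟩
  have hGint : Integrable G volume := S19.Gb_integrable f hα k m
  have hGnn : ∀ t, 0 ≤ G t := S19.Gb_nonneg hα k m
  set IG : ℝ≥0∞ := ENNReal.ofReal (∫ t, G t ∂volume) with hIG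
  have hIGne : IG ≠ ∞ := ENNReal.ofReal_ne_top
  have hlintG : ∫⁻ t, ENNReal.ofReal (G t) ∂volume = IG :=
    (MeasureTheory.ofReal_integral_eq_lintegral_ofReal hGint
      (Filter.Eventually.of_forall hGnn)).symm
  -- square-root splitting of the kernel bound
  set h : Ed d → ℝ≥0∞ := fun t => ENNReal.ofReal (Real.sqrt (G t)) with hh
  have hhmul : ∀ t, h t * h t = ENNReal.ofReal (G t) := fun t => by
    rw [hh, ← ENNReal.ofReal_mul (Real.sqrt_nonneg _), Real.mul_self_sqrt (hGnn t)]
  have hhcont : Continuous h := ENNReal.continuous_ofReal.comp (S19.Gb_cont f α k m).sqrt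
  set N : Ed d → ℝ≥0∞ := fun r => (‖ξ r‖₊ : ℝ≥0∞) with hN
  have two_rpow : ∀ x : ℝ≥0∞, x ^ (2:ℝ) = x * x := fun x => by
    rw [show (2:ℝ) = ((2:ℕ):ℝ) by norm_num, ENNReal.rpow_natCast, sq]
  set Iξ : ℝ≥0∞ := ∫⁻ r, N r * N r ∂volume with hIξ
  -- pointwise formula for the commutator
  have hTfun : (Jpow α (deltaIter (UfRaw θ ⇑f) k (Jpow (1 - α) ⇑ξ))
      - deltaIter (UfRaw θ ⇑f) k (Jpow α (Jpow (1 - α) ⇑ξ)))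
      = fun s => ∫ t, S19.kerA θ (⇑f) α k (⇑ξ) s t ∂volume :=
    funext (S19.hT_formula θ f α k ξ)
  rw [hTfun]
  -- Step 1: pointwise enorm bound
  have step1 : ∀ s : Ed d, (‖∫ t, S19.kerA θ (⇑f) α k (⇑ξ) s t ∂volume‖₊ : ℝ≥0∞)
      ≤ ∫⁻ t, ENNReal.ofReal (G t) * N (s - t) ∂volume := fun s => by
    refine le_trans (MeasureTheory.enorm_integral_le_lintegral_enorm _)
      (lintegral_mono fun t => ?_)
    calc (‖S19.kerA θ (⇑f) α k (⇑ξ) s t‖₊ : ℝ≥0∞)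
        = ENNReal.ofReal ‖S19.kerA θ (⇑f) α k (⇑ξ) s t‖ :=
          (ofReal_norm_eq_enorm _).symm
      _ ≤ ENNReal.ofReal (G t * ‖ξ (s - t)‖) :=
          ENNReal.ofReal_le_ofReal (S19.norm_kerA_le θ f hα k ξ s t)
      _ = ENNReal.ofReal (G t) * N (s - t) := by
          rw [ENNReal.ofReal_mul (hGnn t), ofReal_norm_eq_enorm]
          rfl
  -- Step 2: Cauchy-Schwarz in `t`
  have step2 : ∀ s : Ed d, ∫⁻ t, ENNReal.ofReal (G t) * N (s - t) ∂volume
      ≤ IG ^ ((1:ℝ)/2)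
        * (∫⁻ t, ENNReal.ofReal (G t) * (N (s - t) * N (s - t)) ∂volume) ^ ((1:ℝ)/2) := by
    intro s
    have hNc : Continuous fun t : Ed d => N (s - t) :=
      ENNReal.continuous_coe.comp ((ξ.continuous.comp (S19.cont_sub_const s)).nnnorm)
    have hold := ENNReal.lintegral_mul_le_Lp_mul_Lq volume
      (⟨by norm_num, by norm_num, by norm_num⟩ : Real.HolderConjugate 2 2)
      hhcont.aemeasurable (hhcont.aemeasurable.mul hNc.aemeasurable)
    calc ∫⁻ t, ENNReal.ofReal (G t) * N (s - t) ∂volume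
        = ∫⁻ t, (h t) * ((h t) * N (s - t)) ∂volume := by
          apply lintegral_congr fun t => ?_
          rw [← mul_assoc, hhmul]
      _ ≤ (∫⁻ t, h t ^ (2:ℝ) ∂volume) ^ ((1:ℝ)/2)
          * (∫⁻ t, (h t * N (s - t)) ^ (2:ℝ) ∂volume) ^ ((1:ℝ)/2) := hold
      _ = IG ^ ((1:ℝ)/2)
          * (∫⁻ t, ENNReal.ofReal (G t) * (N (s - t) * N (s - t)) ∂volume) ^ ((1:ℝ)/2) := by
          congr 1
          · rw [show ∫⁻ t, h t ^ (2:ℝ) ∂volume = ∫⁻ t, ENNReal.ofReal (G t) ∂volume from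
              lintegral_congr fun t => by rw [two_rpow, hhmul], hlintG]
          · congr 1
            apply lintegral_congr fun t => ?_
            rw [two_rpow, mul_mul_mul_comm, hhmul]
  -- Step 3: squared pointwise bound
  have step3 : ∀ s : Ed d, (‖∫ t, S19.kerA θ (⇑f) α k (⇑ξ) s t ∂volume‖₊ : ℝ≥0∞)
        * (‖∫ t, S19.kerA θ (⇑f) α k (⇑ξ) s t ∂volume‖₊ : ℝ≥0∞)
      ≤ IG * ∫⁻ t, ENNReal.ofReal (G t) * (N (s - t) * N (s - t)) ∂volume := fun s => by
    refine le_trans (mul_le_mul' (le_trans (step1 s) (step2 s))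
      (le_trans (step1 s) (step2 s))) (le_of_eq ?_)
    rw [mul_mul_mul_comm, S19.half_mul_self, S19.half_mul_self]
  -- Step 4+5: integrate in `s`, swap, use translation invariance
  have meas_prod : AEMeasurable
      (Function.uncurry fun s t : Ed d => ENNReal.ofReal (G t) * (N (s - t) * N (s - t)))
      (volume.prod volume) := by
    have m1 : Measurable fun p : Ed d × Ed d => ENNReal.ofReal (G p.2) :=
      (ENNReal.continuous_ofReal.comp ((S19.Gb_cont f α k m).comp continuous_snd)).measurable
    have m2 : Measurable fun p : Ed d × Ed d => N (p.1 - p.2) :=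
      (ENNReal.continuous_coe.comp
        ((ξ.continuous.comp (continuous_fst.sub continuous_snd)).nnnorm)).measurable
    exact (m1.mul (m2.mul m2)).aemeasurable
  have step5 : ∫⁻ s, ∫⁻ t, ENNReal.ofReal (G t) * (N (s - t) * N (s - t)) ∂volume ∂volume
      = IG * Iξ := by
    rw [lintegral_lintegral_swap meas_prod]
    have inner : ∀ t : Ed d,
        ∫⁻ s, ENNReal.ofReal (G t) * (N (s - t) * N (s - t)) ∂volume
        = ENNReal.ofReal (G t) * Iξ := fun t => by
      rw [lintegral_const_mul' _ _ ENNReal.ofReal_ne_top, hIξ,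
        lintegral_sub_right_eq_self (fun r => N r * N r) t]
    calc ∫⁻ t, ∫⁻ s, ENNReal.ofReal (G t) * (N (s - t) * N (s - t)) ∂volume ∂volume
        = ∫⁻ t, ENNReal.ofReal (G t) * Iξ ∂volume := lintegral_congr inner
      _ = (∫⁻ t, ENNReal.ofReal (G t) ∂volume) * Iξ :=
          lintegral_mul_const'' _ (ENNReal.continuous_ofReal.comp
            (S19.Gb_cont f α k m)).aemeasurable
      _ = IG * Iξ := by rw [hlintG]
  have step6 : ∫⁻ s, (‖∫ t, S19.kerA θ (⇑f) α k (⇑ξ) s t ∂volume‖₊ : ℝ≥0∞) ^ (2:ℝ) ∂volume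
      ≤ IG * (IG * Iξ) := by
    calc ∫⁻ s, (‖∫ t, S19.kerA θ (⇑f) α k (⇑ξ) s t ∂volume‖₊ : ℝ≥0∞) ^ (2:ℝ) ∂volume
        ≤ ∫⁻ s, IG * ∫⁻ t, ENNReal.ofReal (G t) * (N (s - t) * N (s - t)) ∂volume ∂volume := by
          apply lintegral_mono fun s => ?_
          rw [two_rpow]
          exact step3 s
      _ = IG * ∫⁻ s, ∫⁻ t, ENNReal.ofReal (G t) * (N (s - t) * N (s - t)) ∂volume ∂volume :=
          lintegral_const_mul' _ _ hIGne
      _ = IG * (IG * Iξ) := by rw [step5]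
  -- conclude
  have heLp : eLpNorm (fun s => ∫ t, S19.kerA θ (⇑f) α k (⇑ξ) s t ∂volume) 2 volume
      = (∫⁻ s, (‖∫ t, S19.kerA θ (⇑f) α k (⇑ξ) s t ∂volume‖₊ : ℝ≥0∞) ^ (2:ℝ) ∂volume)
        ^ ((1:ℝ)/2) := by
    rw [MeasureTheory.eLpNorm_eq_lintegral_rpow_enorm_toReal (by norm_num) (by norm_num)]
    simp only [ENNReal.toReal_ofNat]
    rfl
  have heLpξ : eLpNorm (⇑ξ) 2 volume = Iξ ^ ((1:ℝ)/2) := by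
    rw [MeasureTheory.eLpNorm_eq_lintegral_rpow_enorm_toReal (by norm_num) (by norm_num), hIξ]
    simp only [ENNReal.toReal_ofNat]
    rw [show ∫⁻ r, ‖ξ r‖ₑ ^ (2:ℝ) ∂volume = ∫⁻ r, N r * N r ∂volume from
      lintegral_congr fun r => two_rpow _]
  rw [heLp, heLpξ]
  calc (∫⁻ s, (‖∫ t, S19.kerA θ (⇑f) α k (⇑ξ) s t ∂volume‖₊ : ℝ≥0∞) ^ (2:ℝ) ∂volume)
        ^ ((1:ℝ)/2)
      ≤ (IG * (IG * Iξ)) ^ ((1:ℝ)/2) := ENNReal.rpow_le_rpow step6 (by norm_num)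
    _ = (IG * IG) ^ ((1:ℝ)/2) * Iξ ^ ((1:ℝ)/2) := by
        rw [← mul_assoc, ENNReal.mul_rpow_of_nonneg _ _ (by norm_num : (0:ℝ) ≤ 1/2)]
    _ = IG * Iξ ^ ((1:ℝ)/2) := by rw [S19.mul_self_half]
    _ = ENNReal.ofReal (∫ t, G t ∂volume) * Iξ ^ ((1:ℝ)/2) := by rw [hIG]
end
end
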